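/- (Strong law of large numbers for stationary ergodic sequences) Let (V,v) be the pair of upper and lower probabilities on a measurable space (Ω,𝓕) generated by a nonempty set 𝒫 of finitely additive probabilities, assume V and v are continuous, and let Y = {Y_n}_{n∈ℕ} be a stochastic process of real-valued random variables that is uniformly bounded (there is M with |Y_n(ω)| ≤ M for all n, ω), stationary with respect to V, and ergodic, meaning that the shift τ(x_1,x_2,…) = (x_2,x_3,…) on ℝ^ℕ (with the product σ-algebra) is ergodic with respect to the pushforward capacity V_Y(C) = V(Y⁻¹(C)). Then there exists a constant c such that v({ω ∈ Ω : lim_{n→∞} (1/n) ∑_{k=1}^n Y_k(ω) = c}) = 1. If in addition V is concave, then c ∈ [∫_Ω Y_1 dv, ∫_Ω Y_1 dV], where the integrals are Choquet integrals with respect to v and V respectively. -/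

import Mathlib

set_option linter.unusedSectionVars false
set_option linter.unusedVariables false
set_option linter.unusedTactic false
set_option maxHeartbeats 1000000



open MeasureTheory Filter Topology Set

def IsFinAddProb {Ω : Type*} [MeasurableSpace Ω] (P : Set Ω → ℝ) : Prop :=
  P ∅ = 0 ∧ P Set.univ = 1 ∧
    (∀ A : Set Ω, MeasurableSet A → 0 ≤ P A ∧ P A ≤ 1) ∧
    (∀ A B : Set Ω, MeasurableSet A → MeasurableSet B → Disjoint A B →
      P (A ∪ B) = P A + P B)

def IsCapacity {Ω : Type*} [MeasurableSpace Ω] (μ : Set Ω → ℝ) : Prop :=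
  μ ∅ = 0 ∧ μ Set.univ = 1 ∧
    ∀ A B : Set Ω, MeasurableSet A → MeasurableSet B → A ⊆ B → μ A ≤ μ B

def ContBelow {Ω : Type*} [MeasurableSpace Ω] (μ : Set Ω → ℝ) : Prop :=
  ∀ A : ℕ → Set Ω, (∀ n, MeasurableSet (A n)) → Monotone A →
    Filter.Tendsto (fun n => μ (A n)) Filter.atTop (nhds (μ (⋃ n, A n)))

def ContAbove {Ω : Type*} [MeasurableSpace Ω] (μ : Set Ω → ℝ) : Prop :=
  ∀ A : ℕ → Set Ω, (∀ n, MeasurableSet (A n)) → Antitone A →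
    Filter.Tendsto (fun n => μ (A n)) Filter.atTop (nhds (μ (⋂ n, A n)))

def ContAtEmpty {Ω : Type*} [MeasurableSpace Ω] (μ : Set Ω → ℝ) : Prop :=
  ∀ A : ℕ → Set Ω, (∀ n, MeasurableSet (A n)) → Antitone A → (⋂ n, A n) = ∅ →
    Filter.Tendsto (fun n => μ (A n)) Filter.atTop (nhds 0)

def ContAtUniv {Ω : Type*} [MeasurableSpace Ω] (μ : Set Ω → ℝ) : Prop :=
  ∀ A : ℕ → Set Ω, (∀ n, MeasurableSet (A n)) → Monotone A → (⋃ n, A n) = Set.univ →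
    Filter.Tendsto (fun n => μ (A n)) Filter.atTop (nhds 1)

def conjCap {Ω : Type*} (μ : Set Ω → ℝ) (A : Set Ω) : ℝ := 1 - μ Aᶜ

noncomputable def choquet {Ω : Type*} (μ : Set Ω → ℝ) (ξ : Ω → ℝ) : ℝ :=
  (∫ t in Set.Ioi (0:ℝ), μ {ω | ξ ω ≥ t}) +
    (∫ t in Set.Iio (0:ℝ), (μ {ω | ξ ω ≥ t} - 1))

noncomputable def choquetE {Ω : Type*} (μ : Set Ω → ℝ) (ξ : Ω → EReal) : ℝ :=
  (∫ t in Set.Ioi (0:ℝ), μ {ω | (t : EReal) ≤ ξ ω}) +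
    (∫ t in Set.Iio (0:ℝ), (μ {ω | (t : EReal) ≤ ξ ω} - 1))

def UpperProbOf {Ω : Type*} [MeasurableSpace Ω] (𝒮 : Set (Set Ω → ℝ)) (V : Set Ω → ℝ) : Prop :=
  ∀ A : Set Ω, MeasurableSet A → V A = sSup ((fun P => P A) '' 𝒮)

def LowerProbOf {Ω : Type*} [MeasurableSpace Ω] (𝒮 : Set (Set Ω → ℝ)) (v : Set Ω → ℝ) : Prop :=
  ∀ A : Set Ω, MeasurableSet A → v A = sInf ((fun P => P A) '' 𝒮)

def ErgodicCap {Ω : Type*} [MeasurableSpace Ω] (μ : Set Ω → ℝ) (θ : Ω → Ω) : Prop :=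
  ∀ B : Set Ω, MeasurableSet B → θ ⁻¹' B = B →
    (μ B = 0 ∨ μ B = 1) ∧ (μ B = 0 ∨ μ Bᶜ = 0)

def PreservesCap {Ω : Type*} [MeasurableSpace Ω] (μ : Set Ω → ℝ) (θ : Ω → Ω) : Prop :=
  ∀ A : Set Ω, MeasurableSet A → μ (θ ⁻¹' A) = μ A

def IndepSigmaWrt {Ω : Type*} (μ : Set Ω → ℝ) (m₁ m₂ : MeasurableSpace Ω) : Prop :=
  ∀ A B : Set Ω, MeasurableSet[m₁] A → MeasurableSet[m₂] B → μ (A ∩ B) = μ A * μ B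

def StationaryCap {Ω : Type*} [MeasurableSpace Ω] (μ : Set Ω → ℝ) (Y : ℕ → Ω → ℝ) : Prop :=
  ∀ (n k : ℕ) (A : Set (Fin (k + 1) → ℝ)), MeasurableSet A →
    μ {ω | (fun i : Fin (k + 1) => Y (n + (i : ℕ)) ω) ∈ A} =
      μ {ω | (fun i : Fin (k + 1) => Y (n + 1 + (i : ℕ)) ω) ∈ A}

namespace SLLN

variable {Ω : Type*} [MeasurableSpace Ω]

section FA

variable {P : Set Ω → ℝ} (hP : IsFinAddProb P)
include hP

lemma fa_nonneg {A : Set Ω} (hA : MeasurableSet A) : 0 ≤ P A := (hP.2.2.1 A hA).1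

lemma fa_le_one {A : Set Ω} (hA : MeasurableSet A) : P A ≤ 1 := (hP.2.2.1 A hA).2

lemma fa_union {A B : Set Ω} (hA : MeasurableSet A) (hB : MeasurableSet B)
    (hd : Disjoint A B) : P (A ∪ B) = P A + P B := hP.2.2.2 A B hA hB hd

lemma fa_mono {A B : Set Ω} (hA : MeasurableSet A) (hB : MeasurableSet B) (hAB : A ⊆ B) :
    P A ≤ P B := by
  have h1 : P (A ∪ (B \ A)) = P A + P (B \ A) :=
    fa_union hP hA (hB.diff hA) disjoint_sdiff_right
  rw [Set.union_diff_cancel hAB] at h1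
  have := fa_nonneg hP (hB.diff hA)
  linarith

lemma fa_compl {A : Set Ω} (hA : MeasurableSet A) : P Aᶜ = 1 - P A := by
  have h1 : P (A ∪ Aᶜ) = P A + P Aᶜ := fa_union hP hA hA.compl disjoint_compl_right
  rw [Set.union_compl_self] at h1
  rw [hP.2.1] at h1
  linarith

end FA

section Env

variable {𝒮 : Set (Set Ω → ℝ)} {V v : Set Ω → ℝ}

lemma img_ne (hne : 𝒮.Nonempty) (A : Set Ω) : ((fun P => P A) '' 𝒮).Nonempty :=
  hne.image _

lemma img_bddAbove (hfa : ∀ P ∈ 𝒮, IsFinAddProb P) (A : Set Ω) (hA : MeasurableSet A) :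
    BddAbove ((fun P => P A) '' 𝒮) := by
  refine ⟨1, ?_⟩
  rintro y ⟨P, hPm, rfl⟩
  exact fa_le_one (hfa P hPm) hA

lemma img_bddBelow (hfa : ∀ P ∈ 𝒮, IsFinAddProb P) (A : Set Ω) (hA : MeasurableSet A) :
    BddBelow ((fun P => P A) '' 𝒮) := by
  refine ⟨0, ?_⟩
  rintro y ⟨P, hPm, rfl⟩
  exact fa_nonneg (hfa P hPm) hA

lemma le_V (hfa : ∀ P ∈ 𝒮, IsFinAddProb P) (hV : UpperProbOf 𝒮 V)
    {P : Set Ω → ℝ} (hPm : P ∈ 𝒮) {A : Set Ω} (hA : MeasurableSet A) :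
    P A ≤ V A := by
  rw [hV A hA]
  exact le_csSup (img_bddAbove hfa A hA) ⟨P, hPm, rfl⟩

lemma V_le (hne : 𝒮.Nonempty) (hV : UpperProbOf 𝒮 V) {A : Set Ω} (hA : MeasurableSet A) {c : ℝ}
    (h : ∀ P ∈ 𝒮, P A ≤ c) : V A ≤ c := by
  rw [hV A hA]
  exact csSup_le (img_ne hne A) (by rintro y ⟨P, hPm, rfl⟩; exact h P hPm)

lemma v_le (hfa : ∀ P ∈ 𝒮, IsFinAddProb P) (hv : LowerProbOf 𝒮 v)
    {P : Set Ω → ℝ} (hPm : P ∈ 𝒮) {A : Set Ω} (hA : MeasurableSet A) :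
    v A ≤ P A := by
  rw [hv A hA]
  exact csInf_le (img_bddBelow hfa A hA) ⟨P, hPm, rfl⟩

lemma le_v (hne : 𝒮.Nonempty) (hv : LowerProbOf 𝒮 v) {A : Set Ω} (hA : MeasurableSet A) {c : ℝ}
    (h : ∀ P ∈ 𝒮, c ≤ P A) : c ≤ v A := by
  rw [hv A hA]
  exact le_csInf (img_ne hne A) (by rintro y ⟨P, hPm, rfl⟩; exact h P hPm)

lemma V_nonneg (hne : 𝒮.Nonempty) (hfa : ∀ P ∈ 𝒮, IsFinAddProb P) (hV : UpperProbOf 𝒮 V)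
    {A : Set Ω} (hA : MeasurableSet A) : 0 ≤ V A := by
  obtain ⟨P, hPm⟩ := hne
  exact le_trans (fa_nonneg (hfa P hPm) hA) (le_V hfa hV hPm hA)

lemma V_le_one (hne : 𝒮.Nonempty) (hfa : ∀ P ∈ 𝒮, IsFinAddProb P) (hV : UpperProbOf 𝒮 V)
    {A : Set Ω} (hA : MeasurableSet A) : V A ≤ 1 :=
  V_le hne hV hA (fun P hPm => fa_le_one (hfa P hPm) hA)

lemma V_empty (hne : 𝒮.Nonempty) (hfa : ∀ P ∈ 𝒮, IsFinAddProb P) (hV : UpperProbOf 𝒮 V) :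
    V ∅ = 0 := by
  have h1 : V ∅ ≤ 0 := V_le hne hV MeasurableSet.empty (fun P hPm => le_of_eq (hfa P hPm).1)
  exact le_antisymm h1 (V_nonneg hne hfa hV MeasurableSet.empty)

lemma V_univ (hne : 𝒮.Nonempty) (hfa : ∀ P ∈ 𝒮, IsFinAddProb P) (hV : UpperProbOf 𝒮 V) :
    V Set.univ = 1 := by
  have h1 : V Set.univ ≤ 1 := V_le_one hne hfa hV MeasurableSet.univ
  obtain ⟨P, hPm⟩ := hne
  have h2 := le_V hfa hV hPm MeasurableSet.univ
  rw [(hfa P hPm).2.1] at h2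
  linarith

lemma V_mono (hne : 𝒮.Nonempty) (hfa : ∀ P ∈ 𝒮, IsFinAddProb P) (hV : UpperProbOf 𝒮 V)
    {A B : Set Ω} (hA : MeasurableSet A) (hB : MeasurableSet B) (hAB : A ⊆ B) :
    V A ≤ V B :=
  V_le hne hV hA (fun P hPm => le_trans (fa_mono (hfa P hPm) hA hB hAB) (le_V hfa hV hPm hB))

lemma V_union_le (hne : 𝒮.Nonempty) (hfa : ∀ P ∈ 𝒮, IsFinAddProb P) (hV : UpperProbOf 𝒮 V)
    {A B : Set Ω} (hA : MeasurableSet A) (hB : MeasurableSet B) :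
    V (A ∪ B) ≤ V A + V B := by
  refine V_le hne hV (hA.union hB) (fun P hPm => ?_)
  have h1 : P (A ∪ B) = P A + P (B \ A) := by
    rw [show A ∪ B = A ∪ (B \ A) by rw [Set.union_diff_self]]
    exact fa_union (hfa P hPm) hA (hB.diff hA) disjoint_sdiff_right
  have h2 : P (B \ A) ≤ P B := fa_mono (hfa P hPm) (hB.diff hA) hB Set.diff_subset
  have h3 := le_V hfa hV hPm hA
  have h4 := le_V hfa hV hPm hB
  linarith

lemma v_eq_one_sub_V_compl (hne : 𝒮.Nonempty) (hfa : ∀ P ∈ 𝒮, IsFinAddProb P)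
    (hV : UpperProbOf 𝒮 V) (hv : LowerProbOf 𝒮 v)
    {A : Set Ω} (hA : MeasurableSet A) : v A = 1 - V Aᶜ := by
  refine le_antisymm ?_ ?_
  · have h1 : V Aᶜ ≤ 1 - v A := by
      refine V_le hne hV hA.compl (fun P hPm => ?_)
      rw [fa_compl (hfa P hPm) hA]
      have := v_le hfa hv hPm hA
      linarith
    linarith
  · refine le_v hne hv hA (fun P hPm => ?_)
    have h2 : P Aᶜ ≤ V Aᶜ := le_V hfa hV hPm hA.compl
    rw [fa_compl (hfa P hPm) hA] at h2
    linarith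

lemma v_eq_one_of_V_compl_zero (hne : 𝒮.Nonempty) (hfa : ∀ P ∈ 𝒮, IsFinAddProb P)
    (hV : UpperProbOf 𝒮 V) (hv : LowerProbOf 𝒮 v)
    {A : Set Ω} (hA : MeasurableSet A) (h : V Aᶜ = 0) :
    v A = 1 := by
  rw [v_eq_one_sub_V_compl hne hfa hV hv hA, h, sub_zero]


lemma v_empty (hne : 𝒮.Nonempty) (hfa : ∀ P ∈ 𝒮, IsFinAddProb P) (hV : UpperProbOf 𝒮 V)
    (hv : LowerProbOf 𝒮 v) : v ∅ = 0 := by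
  rw [v_eq_one_sub_V_compl hne hfa hV hv MeasurableSet.empty, Set.compl_empty,
    V_univ hne hfa hV]
  ring

lemma v_univ (hne : 𝒮.Nonempty) (hfa : ∀ P ∈ 𝒮, IsFinAddProb P) (hV : UpperProbOf 𝒮 V)
    (hv : LowerProbOf 𝒮 v) : v Set.univ = 1 := by
  rw [v_eq_one_sub_V_compl hne hfa hV hv MeasurableSet.univ, Set.compl_univ,
    V_empty hne hfa hV]
  ring

lemma v_nonneg (hne : 𝒮.Nonempty) (hfa : ∀ P ∈ 𝒮, IsFinAddProb P) (hv : LowerProbOf 𝒮 v)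
    {A : Set Ω} (hA : MeasurableSet A) : 0 ≤ v A :=
  le_v hne hv hA (fun P hPm => fa_nonneg (hfa P hPm) hA)

lemma v_le_one (hne : 𝒮.Nonempty) (hfa : ∀ P ∈ 𝒮, IsFinAddProb P) (hv : LowerProbOf 𝒮 v)
    {A : Set Ω} (hA : MeasurableSet A) : v A ≤ 1 := by
  obtain ⟨P, hPm⟩ := hne
  exact le_trans (v_le hfa hv hPm hA) (fa_le_one (hfa P hPm) hA)

lemma v_mono (hne : 𝒮.Nonempty) (hfa : ∀ P ∈ 𝒮, IsFinAddProb P) (hv : LowerProbOf 𝒮 v)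
    {A B : Set Ω} (hA : MeasurableSet A) (hB : MeasurableSet B) (hAB : A ⊆ B) :
    v A ≤ v B :=
  le_v hne hv hB (fun P hPm =>
    le_trans (v_le hfa hv hPm hA) (fa_mono (hfa P hPm) hA hB hAB))

end Env

section MonotoneClass

variable {X : Type*}

/-- Monotone class theorem. -/
theorem monotone_class (𝒜 : Set (Set X)) (h0 : ∅ ∈ 𝒜) (hc : ∀ A ∈ 𝒜, Aᶜ ∈ 𝒜)
    (hu : ∀ A ∈ 𝒜, ∀ B ∈ 𝒜, A ∪ B ∈ 𝒜) (𝒞 : Set (Set X)) (hsub : 𝒜 ⊆ 𝒞)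
    (hmu : ∀ f : ℕ → Set X, Monotone f → (∀ n, f n ∈ 𝒞) → (⋃ n, f n) ∈ 𝒞)
    (hmi : ∀ f : ℕ → Set X, Antitone f → (∀ n, f n ∈ 𝒞) → (⋂ n, f n) ∈ 𝒞) :
    ∀ A, MeasurableSet[MeasurableSpace.generateFrom 𝒜] A → A ∈ 𝒞 := by
  classical
  set Fam : Set (Set (Set X)) :=
    {D | 𝒜 ⊆ D ∧ (∀ f : ℕ → Set X, Monotone f → (∀ n, f n ∈ D) → (⋃ n, f n) ∈ D) ∧
      (∀ f : ℕ → Set X, Antitone f → (∀ n, f n ∈ D) → (⋂ n, f n) ∈ D)} with hFam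
  set M : Set (Set X) := ⋂₀ Fam with hM
  have hCFam : 𝒞 ∈ Fam := ⟨hsub, hmu, hmi⟩
  have hMC : M ⊆ 𝒞 := sInter_subset_of_mem hCFam
  have hMFam : M ∈ Fam := by
    refine ⟨?_, ?_, ?_⟩
    · intro A hA D hD; exact hD.1 hA
    · intro f hf hfM D hD
      exact hD.2.1 f hf (fun n => hfM n D hD)
    · intro f hf hfM D hD
      exact hD.2.2 f hf (fun n => hfM n D hD)
  have hAM : 𝒜 ⊆ M := hMFam.1
  -- closed under complement
  have hcompl : ∀ A ∈ M, Aᶜ ∈ M := by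
    have : {A | A ∈ M ∧ Aᶜ ∈ M} ∈ Fam := by
      refine ⟨fun A hA => ⟨hAM hA, hAM (hc A hA)⟩, ?_, ?_⟩
      · intro f hf hfM
        refine ⟨hMFam.2.1 f hf (fun n => (hfM n).1), ?_⟩
        rw [Set.compl_iUnion]
        exact hMFam.2.2 _ (fun a b hab => Set.compl_subset_compl.2 (hf hab))
          (fun n => (hfM n).2)
      · intro f hf hfM
        refine ⟨hMFam.2.2 f hf (fun n => (hfM n).1), ?_⟩
        rw [Set.compl_iInter]
        exact hMFam.2.1 _ (fun a b hab => Set.compl_subset_compl.2 (hf hab))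
          (fun n => (hfM n).2)
    intro A hA
    exact (sInter_subset_of_mem this hA).2
  -- closed under union
  have hunion : ∀ A ∈ M, ∀ B ∈ M, A ∪ B ∈ M := by
    have key : ∀ A, ({B | B ∈ M ∧ A ∪ B ∈ M} ∈ Fam ↔ (𝒜 ⊆ {B | B ∈ M ∧ A ∪ B ∈ M})) := by
      intro A
      constructor
      · exact fun h => h.1
      · intro h
        refine ⟨h, ?_, ?_⟩
        · intro f hf hfM
          refine ⟨hMFam.2.1 f hf (fun n => (hfM n).1), ?_⟩
          rw [Set.union_iUnion]
          exact hMFam.2.1 (fun n => A ∪ f n)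
            (fun a b hab => Set.union_subset_union_right A (hf hab)) (fun n => (hfM n).2)
        · intro f hf hfM
          refine ⟨hMFam.2.2 f hf (fun n => (hfM n).1), ?_⟩
          rw [Set.union_iInter]
          exact hMFam.2.2 (fun n => A ∪ f n)
            (fun a b hab => Set.union_subset_union_right A (hf hab)) (fun n => (hfM n).2)
    have step1 : ∀ A ∈ 𝒜, ∀ B ∈ M, A ∪ B ∈ M := by
      intro A hA
      have : M ⊆ {B | B ∈ M ∧ A ∪ B ∈ M} := by
        apply sInter_subset_of_mem
        exact (key A).2 (fun B hB => ⟨hAM hB, hAM (hu A hA B hB)⟩)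
      exact fun B hB => (this hB).2
    intro A hA B hB
    have : M ⊆ {B' | B' ∈ M ∧ B ∪ B' ∈ M} := by
      apply sInter_subset_of_mem
      exact (key B).2 (fun A' hA' => ⟨hAM hA', by
        rw [Set.union_comm]; exact step1 A' hA' B hB⟩)
    rw [Set.union_comm]
    exact (this hA).2
  -- M is a sigma-algebra
  let m : MeasurableSpace X :=
    { MeasurableSet' := fun A => A ∈ M
      measurableSet_empty := hAM h0
      measurableSet_compl := hcompl
      measurableSet_iUnion := by
        intro f hfM
        have hfin : ∀ n, (⋃ k ∈ Finset.range (n+1), f k) ∈ M := by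
          intro n
          induction n with
          | zero => simpa using hfM 0
          | succ n ih =>
            have : (⋃ k ∈ Finset.range (n+2), f k) = (⋃ k ∈ Finset.range (n+1), f k) ∪ f (n+1) := by
              ext x
              simp [Finset.mem_range, Nat.lt_succ_iff]
              constructor
              · rintro ⟨k, hk, hx⟩
                rcases Nat.lt_succ_iff_lt_or_eq.1 (Nat.lt_succ_of_le hk) with h | h
                · exact Or.inl ⟨k, Nat.lt_succ_iff.1 h, hx⟩
                · exact Or.inr (h ▸ hx)
              · rintro (⟨k, hk, hx⟩ | hx)
                · exact ⟨k, le_trans hk (Nat.le_succ n), hx⟩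
                · exact ⟨n+1, le_refl _, hx⟩
            rw [this]
            exact hunion _ ih _ (hfM (n+1))
        have hmono : Monotone (fun n => ⋃ k ∈ Finset.range (n+1), f k) := by
          intro a b hab x hx
          simp only [Set.mem_iUnion] at hx ⊢
          obtain ⟨k, hk, hx⟩ := hx
          exact ⟨k, Finset.mem_range.2 (lt_of_lt_of_le (Finset.mem_range.1 hk)
            (Nat.succ_le_succ hab)), hx⟩
        have hun : (⋃ n, ⋃ k ∈ Finset.range (n+1), f k) = ⋃ n, f n := by
          ext x
          simp only [Set.mem_iUnion]
          constructor
          · rintro ⟨n, k, _, hx⟩; exact ⟨k, hx⟩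
          · rintro ⟨n, hx⟩; exact ⟨n, n, Finset.self_mem_range_succ n, hx⟩
        have := hMFam.2.1 _ hmono hfin
        rwa [hun] at this }
  intro A hA
  have hle : MeasurableSpace.generateFrom 𝒜 ≤ m :=
    MeasurableSpace.generateFrom_le (fun A hA => hAM hA)
  exact hMC (hle A hA)

end MonotoneClass


section Garsia

variable {X : Type*} [MeasurableSpace X]

/-- Birkhoff sums. -/
noncomputable def birkS (T : X → X) (f : X → ℝ) (n : ℕ) (x : X) : ℝ :=
  ∑ j ∈ Finset.range n, f (T^[j] x)

/-- Running maxima `max_{0 ≤ n ≤ N} S_n`. -/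
noncomputable def PhiM (T : X → X) (f : X → ℝ) : ℕ → X → ℝ
  | 0 => fun _ => 0
  | (N + 1) => fun x => max (PhiM T f N x) (birkS T f (N + 1) x)

/-- Running maxima `max_{1 ≤ n ≤ N+1} S_n`. -/
noncomputable def PsiM (T : X → X) (f : X → ℝ) : ℕ → X → ℝ
  | 0 => birkS T f 1
  | (N + 1) => fun x => max (PsiM T f N x) (birkS T f (N + 2) x)

variable {T : X → X} {f : X → ℝ}

lemma birkS_zero (x : X) : birkS T f 0 x = 0 := by simp [birkS]

lemma birkS_succ (n : ℕ) (x : X) : birkS T f (n + 1) x = f x + birkS T f n (T x) := by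
  rw [birkS, birkS, Finset.sum_range_succ' (fun j => f (T^[j] x)) n]
  simp only [Function.iterate_succ_apply, Function.iterate_zero_apply]
  ring

lemma PhiM_nonneg (N : ℕ) (x : X) : 0 ≤ PhiM T f N x := by
  induction N with
  | zero => simp [PhiM]
  | succ N ih => exact le_trans ih (le_max_left _ _)

lemma PhiM_mono (N : ℕ) (x : X) : PhiM T f N x ≤ PhiM T f (N + 1) x := le_max_left _ _

lemma PsiM_eq (N : ℕ) (x : X) : PsiM T f N x = f x + PhiM T f N (T x) := by
  induction N with
  | zero => simp [PsiM, PhiM, birkS_succ, birkS_zero]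
  | succ N ih =>
    show max (PsiM T f N x) (birkS T f (N + 2) x) = _
    rw [ih, birkS_succ (N + 1) x]
    show _ = f x + max (PhiM T f N (T x)) (birkS T f (N + 1) (T x))
    rw [max_add_add_left]

lemma PhiM_succ_eq (N : ℕ) (x : X) : PhiM T f (N + 1) x = max 0 (PsiM T f N x) := by
  induction N with
  | zero =>
    show max (PhiM T f 0 x) (birkS T f 1 x) = max 0 (birkS T f 1 x)
    simp [PhiM]
  | succ N ih =>
    show max (PhiM T f (N + 1) x) (birkS T f (N + 2) x) = max 0 (PsiM T f (N + 1) x)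
    rw [ih]
    show _ = max 0 (max (PsiM T f N x) (birkS T f (N + 2) x))
    rw [max_assoc]

lemma birkS_le_PsiM {n N : ℕ} (h1 : 1 ≤ n) (h2 : n ≤ N + 1) (x : X) :
    birkS T f n x ≤ PsiM T f N x := by
  induction N with
  | zero =>
    have : n = 1 := by omega
    subst this
    exact le_refl _
  | succ N ih =>
    rcases Nat.lt_or_ge n (N + 2) with h | h
    · exact le_trans (ih (by omega)) (le_max_left _ _)
    · have : n = N + 2 := by omega
      subst this
      exact le_max_right _ _

lemma PsiM_mono (N : ℕ) (x : X) : PsiM T f N x ≤ PsiM T f (N + 1) x := le_max_left _ _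

lemma birkS_meas (hT : Measurable T) (hf : Measurable f) (n : ℕ) :
    Measurable (birkS T f n) := by
  apply Finset.measurable_sum
  intro j _
  exact hf.comp (hT.iterate j)

lemma PhiM_meas (hT : Measurable T) (hf : Measurable f) (N : ℕ) :
    Measurable (PhiM T f N) := by
  induction N with
  | zero => exact measurable_const
  | succ N ih => exact ih.max (birkS_meas hT hf (N + 1))

lemma PsiM_meas (hT : Measurable T) (hf : Measurable f) (N : ℕ) :
    Measurable (PsiM T f N) := by
  induction N with
  | zero => exact birkS_meas hT hf 1
  | succ N ih => exact ih.max (birkS_meas hT hf (N + 2))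

lemma birkS_abs {C : ℝ} (hC : ∀ x, |f x| ≤ C) (n : ℕ) (x : X) :
    |birkS T f n x| ≤ n * C := by
  calc |birkS T f n x| ≤ ∑ j ∈ Finset.range n, |f (T^[j] x)| := Finset.abs_sum_le_sum_abs _ _
    _ ≤ ∑ _j ∈ Finset.range n, C := Finset.sum_le_sum (fun j _ => hC _)
    _ = n * C := by rw [Finset.sum_const, Finset.card_range, nsmul_eq_mul]

lemma PhiM_abs {C : ℝ} (hC0 : 0 ≤ C) (hC : ∀ x, |f x| ≤ C) (N : ℕ) (x : X) :
    |PhiM T f N x| ≤ (N + 1) * C := by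
  induction N with
  | zero =>
    show |(0:ℝ)| ≤ _
    simp
    positivity
  | succ N ih =>
    show |max (PhiM T f N x) (birkS T f (N + 1) x)| ≤ _
    rw [abs_le]
    have h1 := abs_le.1 ih
    have h2 := abs_le.1 (birkS_abs (T := T) hC (N + 1) x)
    push_cast at h2
    constructor
    · apply le_max_of_le_left
      have : ((N:ℝ) + 1) * C ≤ ((N:ℝ) + 1 + 1) * C := by nlinarith
      push_cast
      linarith [h1.1]
    · apply max_le
      · push_cast
        nlinarith [h1.2]
      · push_cast
        nlinarith [h2.2]

lemma integrable_of_bounded {Q : Measure X} [IsFiniteMeasure Q] {g : X → ℝ}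
    (hg : Measurable g) {b : ℝ} (hb : ∀ x, |g x| ≤ b) : Integrable g Q := by
  apply (integrable_const b).mono' hg.aestronglyMeasurable
  apply ae_of_all
  intro x
  rw [Real.norm_eq_abs]
  exact hb x

/-- Garsia's maximal ergodic theorem, in the form we need. -/
lemma maximal_ergodic (Q : Measure X) [IsProbabilityMeasure Q]
    (hT : MeasurePreserving T Q Q) (hf : Measurable f)
    {C : ℝ} (hC0 : 0 ≤ C) (hC : ∀ x, |f x| ≤ C)
    (hE : Q {x | ∃ n, 1 ≤ n ∧ 0 ≤ birkS T f n x} = 1) :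
    0 ≤ ∫ x, f x ∂Q := by
  classical
  have hfi : Integrable f Q := integrable_of_bounded hf hC
  set EN : ℕ → Set X := fun N => {x | 0 ≤ PsiM T f N x} with hEN
  have hENm : ∀ N, MeasurableSet (EN N) :=
    fun N => measurableSet_le measurable_const (PsiM_meas hT.measurable hf N)
  have hENmono : Monotone EN := by
    intro a b hab
    induction b with
    | zero =>
      have : a = 0 := by omega
      subst this; exact le_refl _
    | succ b ih =>
      rcases Nat.lt_or_ge a (b + 1) with h | h
      · refine le_trans (ih (by omega)) ?_
        intro x hx
        exact le_trans hx (PsiM_mono b x)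
      · have : a = b + 1 := by omega
        subst this; exact le_refl _
  have hEsub : {x | ∃ n, 1 ≤ n ∧ 0 ≤ birkS T f n x} ⊆ ⋃ N, EN N := by
    rintro x ⟨n, hn1, hn2⟩
    apply Set.mem_iUnion.2
    refine ⟨n - 1, ?_⟩
    have : n - 1 + 1 = n := by omega
    exact le_trans hn2 (birkS_le_PsiM hn1 (by omega) x)
  have hQE : Q (⋃ N, EN N) = 1 := by
    apply le_antisymm prob_le_one
    calc (1 : ENNReal) = Q {x | ∃ n, 1 ≤ n ∧ 0 ≤ birkS T f n x} := hE.symm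
      _ ≤ Q (⋃ N, EN N) := measure_mono hEsub
  -- the key inequality on each `EN N`
  have hkey : ∀ N, 0 ≤ ∫ x in EN N, f x ∂Q := by
    intro N
    set G : X → ℝ := PhiM T f (N + 1) with hG
    have hGm : Measurable G := PhiM_meas hT.measurable hf (N + 1)
    have hGi : Integrable G Q := integrable_of_bounded hGm (PhiM_abs hC0 hC (N + 1))
    have hGTi : Integrable (fun x => G (T x)) Q := by
      apply integrable_of_bounded (hGm.comp hT.measurable)
      intro x
      exact PhiM_abs hC0 hC (N + 1) (T x)
    have hptwise : ∀ x ∈ EN N, G x - G (T x) ≤ f x := by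
      intro x hx
      have h1 : PsiM T f N x = f x + PhiM T f N (T x) := PsiM_eq N x
      have h2 : G x = PsiM T f N x := by
        rw [hG, PhiM_succ_eq N x, max_eq_right hx]
      have h3 : PhiM T f N (T x) ≤ G (T x) := PhiM_mono N (T x)
      linarith
    have hGcompl : ∀ x ∈ (EN N)ᶜ, G x = 0 := by
      intro x hx
      rw [Set.mem_compl_iff, hEN, Set.mem_setOf_eq, not_le] at hx
      rw [hG, PhiM_succ_eq N x, max_eq_left hx.le]
    have step1 : ∫ x in EN N, (G x - G (T x)) ∂Q ≤ ∫ x in EN N, f x ∂Q := by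
      apply setIntegral_mono_on ((hGi.sub hGTi).integrableOn) (hfi.integrableOn) (hENm N)
      exact hptwise
    have step2 : ∫ x in EN N, (G x - G (T x)) ∂Q =
        ∫ x in EN N, G x ∂Q - ∫ x in EN N, G (T x) ∂Q :=
      integral_sub (hGi.integrableOn) (hGTi.integrableOn)
    have step3 : ∫ x in EN N, G (T x) ∂Q ≤ ∫ x, G (T x) ∂Q := by
      apply setIntegral_le_integral hGTi
      apply ae_of_all
      intro x
      exact PhiM_nonneg (N + 1) (T x)
    have step4 : ∫ x, G (T x) ∂Q = ∫ x, G x ∂Q := by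
      have hsm : AEStronglyMeasurable G (Measure.map T Q) := by
        rw [hT.map_eq]; exact hGm.aestronglyMeasurable
      rw [← integral_map hT.measurable.aemeasurable hsm, hT.map_eq]
    have step5 : ∫ x in EN N, G x ∂Q + ∫ x in (EN N)ᶜ, G x ∂Q = ∫ x, G x ∂Q :=
      integral_add_compl (hENm N) hGi
    have step6 : ∫ x in (EN N)ᶜ, G x ∂Q = 0 := by
      rw [setIntegral_congr_fun (hENm N).compl hGcompl]
      simp
    linarith
  have htend : Tendsto (fun N => ∫ x in EN N, f x ∂Q) atTop
      (nhds (∫ x in ⋃ N, EN N, f x ∂Q)) :=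
    tendsto_setIntegral_of_monotone hENm hENmono hfi.integrableOn
  have hEint : 0 ≤ ∫ x in ⋃ N, EN N, f x ∂Q :=
    ge_of_tendsto htend (Filter.Eventually.of_forall hkey)
  have hsplit : ∫ x in ⋃ N, EN N, f x ∂Q + ∫ x in (⋃ N, EN N)ᶜ, f x ∂Q = ∫ x, f x ∂Q :=
    integral_add_compl (MeasurableSet.iUnion hENm) hfi
  have hcompl0 : ∫ x in (⋃ N, EN N)ᶜ, f x ∂Q = 0 := by
    have h0 : Q ((⋃ N, EN N)ᶜ) = 0 :=
      (prob_compl_eq_zero_iff (MeasurableSet.iUnion hENm)).2 hQE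
    rw [Measure.restrict_eq_zero.2 h0, integral_zero_measure]
  linarith

end Garsia


section IntegralHelpers

open MeasureTheory

lemma integrableOn_of_bounded_finite {h : ℝ → ℝ} (hm : Measurable h) {b : ℝ}
    (hb : ∀ s, |h s| ≤ b) {s : Set ℝ} (hfin : volume s ≠ ⊤) :
    IntegrableOn h s volume := by
  apply Integrable.mono' (g := fun _ => b)
  · exact integrableOn_const hfin
  · exact hm.aestronglyMeasurable.restrict
  · exact ae_of_all _ (fun t => by rw [Real.norm_eq_abs]; exact hb t)

lemma integrableOn_Ioi_of_vanish {h : ℝ → ℝ} (hm : Measurable h) {b R a : ℝ}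
    (hb : ∀ s, |h s| ≤ b) (hR : ∀ s, R ≤ s → h s = 0) :
    IntegrableOn h (Set.Ioi a) volume := by
  rcases le_or_gt a R with haR | haR
  · rw [← Set.Ioc_union_Ioi_eq_Ioi haR]
    apply IntegrableOn.union
    · exact integrableOn_of_bounded_finite hm hb (by simp [Real.volume_Ioc])
    · apply IntegrableOn.congr_fun integrableOn_zero ?_ measurableSet_Ioi
      intro s hs
      exact (hR s (le_of_lt hs)).symm
  · apply IntegrableOn.congr_fun integrableOn_zero ?_ measurableSet_Ioi
    intro s hs
    exact (hR s (le_of_lt (lt_trans haR hs))).symm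

lemma integrableOn_Iio_of_vanish {h : ℝ → ℝ} (hm : Measurable h) {b R a : ℝ}
    (hb : ∀ s, |h s| ≤ b) (hR : ∀ s, s ≤ R → h s = 0) :
    IntegrableOn h (Set.Iio a) volume := by
  rcases le_or_gt R a with haR | haR
  · rw [← Set.Iio_union_Ico_eq_Iio haR]
    apply IntegrableOn.union
    · apply IntegrableOn.congr_fun integrableOn_zero ?_ measurableSet_Iio
      intro s hs
      exact (hR s (le_of_lt hs)).symm
    · exact integrableOn_of_bounded_finite hm hb (by simp [Real.volume_Ico])
  · apply IntegrableOn.congr_fun integrableOn_zero ?_ measurableSet_Iio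
    intro s hs
    exact (hR s (le_of_lt (lt_trans hs haR))).symm

lemma integral_Ioi_comp_sub (h : ℝ → ℝ) (a c : ℝ) :
    ∫ t in Set.Ioi a, h (t - c) = ∫ s in Set.Ioi (a - c), h s := by
  rw [← integral_indicator measurableSet_Ioi, ← integral_indicator measurableSet_Ioi]
  have heq : (Set.Ioi a).indicator (fun t => h (t - c)) =
      (fun t => (Set.Ioi (a - c)).indicator h (t - c)) := by
    funext t
    by_cases ht : t ∈ Set.Ioi a
    · rw [Set.indicator_of_mem ht, Set.indicator_of_mem]
      simp only [Set.mem_Ioi] at ht ⊢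
      linarith
    · rw [Set.indicator_of_notMem ht, Set.indicator_of_notMem]
      simp only [Set.mem_Ioi] at ht ⊢
      intro hcon
      exact ht (by linarith)
  rw [heq, integral_sub_right_eq_self ((Set.Ioi (a - c)).indicator h) c]

lemma integral_Iio_comp_sub (h : ℝ → ℝ) (a c : ℝ) :
    ∫ t in Set.Iio a, h (t - c) = ∫ s in Set.Iio (a - c), h s := by
  rw [← integral_indicator measurableSet_Iio, ← integral_indicator measurableSet_Iio]
  have heq : (Set.Iio a).indicator (fun t => h (t - c)) =
      (fun t => (Set.Iio (a - c)).indicator h (t - c)) := by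
    funext t
    by_cases ht : t ∈ Set.Iio a
    · rw [Set.indicator_of_mem ht, Set.indicator_of_mem]
      simp only [Set.mem_Iio] at ht ⊢
      linarith
    · rw [Set.indicator_of_notMem ht, Set.indicator_of_notMem]
      simp only [Set.mem_Iio] at ht ⊢
      intro hcon
      exact ht (by linarith)
  rw [heq, integral_sub_right_eq_self ((Set.Iio (a - c)).indicator h) c]

end IntegralHelpers


section Main

/-- The shift on sequence space. -/
def shift : (ℕ → ℝ) → (ℕ → ℝ) := fun x n => x (n + 1)

lemma measurable_shift : Measurable shift :=
  measurable_pi_lambda _ (fun n => measurable_pi_apply _)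

/-- Bundled context for the main theorem. -/
structure Ctx (Ω : Type*) [MeasurableSpace Ω] where
  𝒮 : Set (Set Ω → ℝ)
  hne : 𝒮.Nonempty
  hfa : ∀ P ∈ 𝒮, IsFinAddProb P
  V : Set Ω → ℝ
  v : Set Ω → ℝ
  hV : UpperProbOf 𝒮 V
  hv : LowerProbOf 𝒮 v
  hVb : ContBelow V
  hVa : ContAbove V
  Y : ℕ → Ω → ℝ
  hY : ∀ n, Measurable (Y n)
  M : ℝ
  hM0 : 0 ≤ M
  hbd : ∀ (n : ℕ) (ω : Ω), |Y n ω| ≤ M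
  hstat : StationaryCap V Y
  herg : ErgodicCap (fun C : Set (ℕ → ℝ) => V ((fun ω (n : ℕ) => Y n ω) ⁻¹' C))
    (fun (x : ℕ → ℝ) (n : ℕ) => x (n + 1))

namespace Ctx

variable {Ω : Type*} [MeasurableSpace Ω] (E : Ctx Ω)

/-- The process as a map to sequence space. -/
def Ym : Ω → ℕ → ℝ := fun ω n => E.Y n ω

lemma measurable_Ym : Measurable E.Ym := measurable_pi_lambda _ (fun n => E.hY n)

/-- Pushforward upper probability on sequence space. -/
def VY : Set (ℕ → ℝ) → ℝ := fun C => E.V (E.Ym ⁻¹' C)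

lemma VY_empty : E.VY ∅ = 0 := by
  have : E.Ym ⁻¹' (∅ : Set (ℕ → ℝ)) = ∅ := Set.preimage_empty
  rw [VY, this]; exact V_empty E.hne E.hfa E.hV

lemma VY_univ : E.VY Set.univ = 1 := by
  have : E.Ym ⁻¹' (Set.univ : Set (ℕ → ℝ)) = Set.univ := Set.preimage_univ
  rw [VY, this]; exact V_univ E.hne E.hfa E.hV

lemma VY_nonneg {A : Set (ℕ → ℝ)} (hA : MeasurableSet A) : 0 ≤ E.VY A :=
  V_nonneg E.hne E.hfa E.hV (E.measurable_Ym hA)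

lemma VY_le_one {A : Set (ℕ → ℝ)} (hA : MeasurableSet A) : E.VY A ≤ 1 :=
  V_le_one E.hne E.hfa E.hV (E.measurable_Ym hA)

lemma VY_mono {A B : Set (ℕ → ℝ)} (hA : MeasurableSet A) (hB : MeasurableSet B)
    (hAB : A ⊆ B) : E.VY A ≤ E.VY B :=
  V_mono E.hne E.hfa E.hV (E.measurable_Ym hA) (E.measurable_Ym hB)
    (Set.preimage_mono hAB)

lemma VY_union_le {A B : Set (ℕ → ℝ)} (hA : MeasurableSet A) (hB : MeasurableSet B) :
    E.VY (A ∪ B) ≤ E.VY A + E.VY B := by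
  rw [VY, Set.preimage_union]
  exact V_union_le E.hne E.hfa E.hV (E.measurable_Ym hA) (E.measurable_Ym hB)

lemma VY_tendsto_mono (A : ℕ → Set (ℕ → ℝ)) (hmeas : ∀ n, MeasurableSet (A n))
    (hmono : Monotone A) :
    Tendsto (fun n => E.VY (A n)) atTop (nhds (E.VY (⋃ n, A n))) := by
  have := E.hVb (fun n => E.Ym ⁻¹' A n) (fun n => E.measurable_Ym (hmeas n))
    (fun a b hab => Set.preimage_mono (hmono hab))
  rwa [← Set.preimage_iUnion] at this

lemma VY_tendsto_anti (A : ℕ → Set (ℕ → ℝ)) (hmeas : ∀ n, MeasurableSet (A n))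
    (hanti : Antitone A) :
    Tendsto (fun n => E.VY (A n)) atTop (nhds (E.VY (⋂ n, A n))) := by
  have := E.hVa (fun n => E.Ym ⁻¹' A n) (fun n => E.measurable_Ym (hmeas n))
    (fun a b hab => Set.preimage_mono (hanti hab))
  rwa [← Set.preimage_iInter] at this

/-- Stationarity for blocks starting at `j`. -/
lemma stat_block (j k : ℕ) (A : Set (Fin (k + 1) → ℝ)) (hA : MeasurableSet A) :
    E.V {ω | (fun i : Fin (k + 1) => E.Y (j + (i : ℕ)) ω) ∈ A} =
      E.V {ω | (fun i : Fin (k + 1) => E.Y (i : ℕ) ω) ∈ A} := by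
  induction j with
  | zero => simp
  | succ j ih =>
    rw [← E.hstat j k A hA]
    exact ih

/-- Shift invariance of `VY` on cylinder sets. -/
lemma VY_shift_cyl {C : Set (ℕ → ℝ)} (hC : C ∈ measurableCylinders (fun _ : ℕ => ℝ)) :
    E.VY (shift ⁻¹' C) = E.VY C := by
  obtain ⟨s, S, hS, rfl⟩ := (mem_measurableCylinders C).1 hC
  classical
  set k := s.sup id with hk
  have hmem : ∀ i ∈ s, (i : ℕ) < k + 1 := by
    intro i hi
    exact Nat.lt_succ_of_le (Finset.le_sup (f := id) hi)
  set r : (Fin (k + 1) → ℝ) → (∀ _ : (s : Finset ℕ), ℝ) :=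
    fun g i => g ⟨(i : ℕ), hmem i i.2⟩ with hr
  have hrm : Measurable r := measurable_pi_lambda _ (fun i => measurable_pi_apply _)
  have h0 : E.Ym ⁻¹' (cylinder s S) =
      {ω | (fun i : Fin (k + 1) => E.Y (0 + (i : ℕ)) ω) ∈ r ⁻¹' S} := by
    ext ω
    simp only [Set.mem_preimage, mem_cylinder, Set.mem_setOf_eq]
    have : s.restrict (E.Ym ω) = r (fun i : Fin (k + 1) => E.Y (0 + (i : ℕ)) ω) := by
      funext i; simp [Finset.restrict, hr, Ym]
    rw [this]
  have h1 : E.Ym ⁻¹' (shift ⁻¹' (cylinder s S)) =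
      {ω | (fun i : Fin (k + 1) => E.Y (1 + (i : ℕ)) ω) ∈ r ⁻¹' S} := by
    ext ω
    simp only [Set.mem_preimage, mem_cylinder, Set.mem_setOf_eq]
    have : s.restrict (shift (E.Ym ω)) = r (fun i : Fin (k + 1) => E.Y (1 + (i : ℕ)) ω) := by
      funext i; simp [Finset.restrict, hr, Ym, shift, Nat.add_comm]
    rw [this]
  rw [VY, VY, h0, h1, E.stat_block 1 k (r ⁻¹' S) (hrm hS),
    E.stat_block 0 k (r ⁻¹' S) (hrm hS)]

/-- Shift invariance of `VY` on all measurable sets, via the monotone class theorem. -/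
lemma VY_shift {A : Set (ℕ → ℝ)} (hA : MeasurableSet A) :
    E.VY (shift ⁻¹' A) = E.VY A := by
  classical
  set 𝒞 : Set (Set (ℕ → ℝ)) := {B | MeasurableSet B ∧ E.VY (shift ⁻¹' B) = E.VY B ∧
    E.VY (shift ⁻¹' Bᶜ) = E.VY Bᶜ} with h𝒞
  have hcyl : measurableCylinders (fun _ : ℕ => ℝ) ⊆ 𝒞 := by
    intro C hC
    exact ⟨MeasurableSet.of_mem_measurableCylinders hC, E.VY_shift_cyl hC,
      E.VY_shift_cyl (compl_mem_measurableCylinders hC)⟩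
  have hmu : ∀ f : ℕ → Set (ℕ → ℝ), Monotone f → (∀ n, f n ∈ 𝒞) → (⋃ n, f n) ∈ 𝒞 := by
    intro f hf hfC
    have hms : ∀ n, MeasurableSet (f n) := fun n => (hfC n).1
    refine ⟨MeasurableSet.iUnion hms, ?_, ?_⟩
    · have t1 := E.VY_tendsto_mono (fun n => shift ⁻¹' f n)
        (fun n => measurable_shift (hms n)) (fun a b hab => Set.preimage_mono (hf hab))
      have t2 := E.VY_tendsto_mono f hms hf
      rw [← Set.preimage_iUnion] at t1
      have : (fun n => E.VY (shift ⁻¹' f n)) = (fun n => E.VY (f n)) := by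
        funext n; exact (hfC n).2.1
      rw [this] at t1
      exact tendsto_nhds_unique t1 t2
    · rw [Set.compl_iUnion]
      have t1 := E.VY_tendsto_anti (fun n => shift ⁻¹' (f n)ᶜ)
        (fun n => measurable_shift (hms n).compl)
        (fun a b hab => Set.preimage_mono (Set.compl_subset_compl.2 (hf hab)))
      have t2 := E.VY_tendsto_anti (fun n => (f n)ᶜ) (fun n => (hms n).compl)
        (fun a b hab => Set.compl_subset_compl.2 (hf hab))
      rw [← Set.preimage_iInter] at t1
      have : (fun n => E.VY (shift ⁻¹' (f n)ᶜ)) = (fun n => E.VY (f n)ᶜ) := by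
        funext n; exact (hfC n).2.2
      rw [this] at t1
      exact tendsto_nhds_unique t1 t2
  have hmi : ∀ f : ℕ → Set (ℕ → ℝ), Antitone f → (∀ n, f n ∈ 𝒞) → (⋂ n, f n) ∈ 𝒞 := by
    intro f hf hfC
    have hms : ∀ n, MeasurableSet (f n) := fun n => (hfC n).1
    refine ⟨MeasurableSet.iInter hms, ?_, ?_⟩
    · have t1 := E.VY_tendsto_anti (fun n => shift ⁻¹' f n)
        (fun n => measurable_shift (hms n)) (fun a b hab => Set.preimage_mono (hf hab))
      have t2 := E.VY_tendsto_anti f hms hf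
      rw [← Set.preimage_iInter] at t1
      have : (fun n => E.VY (shift ⁻¹' f n)) = (fun n => E.VY (f n)) := by
        funext n; exact (hfC n).2.1
      rw [this] at t1
      exact tendsto_nhds_unique t1 t2
    · rw [Set.compl_iInter]
      have t1 := E.VY_tendsto_mono (fun n => shift ⁻¹' (f n)ᶜ)
        (fun n => measurable_shift (hms n).compl)
        (fun a b hab => Set.preimage_mono (Set.compl_subset_compl.2 (hf hab)))
      have t2 := E.VY_tendsto_mono (fun n => (f n)ᶜ) (fun n => (hms n).compl)
        (fun a b hab => Set.compl_subset_compl.2 (hf hab))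
      rw [← Set.preimage_iUnion] at t1
      have : (fun n => E.VY (shift ⁻¹' (f n)ᶜ)) = (fun n => E.VY (f n)ᶜ) := by
        funext n; exact (hfC n).2.2
      rw [this] at t1
      exact tendsto_nhds_unique t1 t2
  have halg0 : (∅ : Set (ℕ → ℝ)) ∈ measurableCylinders (fun _ : ℕ => ℝ) :=
    empty_mem_measurableCylinders _
  have halgc : ∀ B ∈ measurableCylinders (fun _ : ℕ => ℝ),
      Bᶜ ∈ measurableCylinders (fun _ : ℕ => ℝ) :=
    fun B hB => compl_mem_measurableCylinders hB
  have halgu : ∀ B ∈ measurableCylinders (fun _ : ℕ => ℝ),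
      ∀ C ∈ measurableCylinders (fun _ : ℕ => ℝ),
      B ∪ C ∈ measurableCylinders (fun _ : ℕ => ℝ) :=
    fun B hB C hC => union_mem_measurableCylinders hB hC
  have := monotone_class _ halg0 halgc halgu 𝒞 hcyl hmu hmi A
    (by rw [generateFrom_measurableCylinders]; exact hA)
  exact this.2.1

/-- Shift iterate invariance. -/
lemma VY_shift_iter (j : ℕ) {A : Set (ℕ → ℝ)} (hA : MeasurableSet A) :
    E.VY (shift^[j] ⁻¹' A) = E.VY A := by
  induction j with
  | zero => simp
  | succ j ih =>
    rw [Function.iterate_succ, Set.preimage_comp]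
    rw [E.VY_shift (measurable_shift.iterate j hA)]
    exact ih


/-- A fixed ultrafilter extending `atTop` on `ℕ`. -/
noncomputable def UF : Ultrafilter ℕ := Ultrafilter.of atTop

lemma UF_le_atTop : (UF : Filter ℕ) ≤ atTop := Ultrafilter.of_le _

noncomputable def P0 : Set Ω → ℝ := E.hne.choose

lemma P0_mem : E.P0 ∈ E.𝒮 := E.hne.choose_spec

lemma P0_fa : IsFinAddProb E.P0 := E.hfa _ E.P0_mem

/-- Lower pushforward probability. -/
def vY : Set (ℕ → ℝ) → ℝ := fun C => E.v (E.Ym ⁻¹' C)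

lemma vY_eq_one_of_VY_compl {A : Set (ℕ → ℝ)} (hA : MeasurableSet A)
    (h : E.VY Aᶜ = 0) : E.vY A = 1 := by
  rw [vY]
  refine v_eq_one_of_V_compl_zero E.hne E.hfa E.hV E.hv (E.measurable_Ym hA) ?_
  rw [← Set.preimage_compl]; exact h


lemma vY_eq {A : Set (ℕ → ℝ)} (hA : MeasurableSet A) : E.vY A = 1 - E.VY Aᶜ := by
  rw [vY, v_eq_one_sub_V_compl E.hne E.hfa E.hV E.hv (E.measurable_Ym hA), VY,
    Set.preimage_compl]

/-- Cesàro averages of the pushforward of `P0`. -/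
noncomputable def qm (m : ℕ) (A : Set (ℕ → ℝ)) : ℝ :=
  ((m : ℝ) + 1)⁻¹ * ∑ k ∈ Finset.range (m + 1), E.P0 (E.Ym ⁻¹' (shift^[k] ⁻¹' A))

lemma qm_term_meas (k : ℕ) {A : Set (ℕ → ℝ)} (hA : MeasurableSet A) :
    MeasurableSet (E.Ym ⁻¹' (shift^[k] ⁻¹' A)) :=
  E.measurable_Ym ((measurable_shift.iterate k) hA)

lemma qm_nonneg (m : ℕ) {A : Set (ℕ → ℝ)} (hA : MeasurableSet A) : 0 ≤ E.qm m A := by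
  apply mul_nonneg (by positivity)
  exact Finset.sum_nonneg (fun k _ => fa_nonneg E.P0_fa (E.qm_term_meas k hA))

lemma qm_le_VY (m : ℕ) {A : Set (ℕ → ℝ)} (hA : MeasurableSet A) : E.qm m A ≤ E.VY A := by
  have hterm : ∀ k ∈ Finset.range (m + 1),
      E.P0 (E.Ym ⁻¹' (shift^[k] ⁻¹' A)) ≤ E.VY A := by
    intro k _
    calc E.P0 (E.Ym ⁻¹' (shift^[k] ⁻¹' A)) ≤ E.V (E.Ym ⁻¹' (shift^[k] ⁻¹' A)) :=
          le_V E.hfa E.hV E.P0_mem (E.qm_term_meas k hA)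
      _ = E.VY (shift^[k] ⁻¹' A) := rfl
      _ = E.VY A := E.VY_shift_iter k hA
  have hsum : ∑ k ∈ Finset.range (m + 1), E.P0 (E.Ym ⁻¹' (shift^[k] ⁻¹' A)) ≤
      ((m : ℝ) + 1) * E.VY A := by
    calc _ ≤ ∑ _k ∈ Finset.range (m + 1), E.VY A := Finset.sum_le_sum hterm
      _ = ((m : ℝ) + 1) * E.VY A := by
        rw [Finset.sum_const, Finset.card_range]; push_cast; ring
  rw [qm]
  have hpos : (0 : ℝ) < (m : ℝ) + 1 := by positivity
  calc ((m : ℝ) + 1)⁻¹ * ∑ k ∈ Finset.range (m + 1), E.P0 (E.Ym ⁻¹' (shift^[k] ⁻¹' A))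
      ≤ ((m : ℝ) + 1)⁻¹ * (((m : ℝ) + 1) * E.VY A) := by
        apply mul_le_mul_of_nonneg_left hsum (by positivity)
    _ = E.VY A := by field_simp

lemma vY_le_qm (m : ℕ) {A : Set (ℕ → ℝ)} (hA : MeasurableSet A) : E.vY A ≤ E.qm m A := by
  have hterm : ∀ k ∈ Finset.range (m + 1),
      E.vY A ≤ E.P0 (E.Ym ⁻¹' (shift^[k] ⁻¹' A)) := by
    intro k _
    have h1 : E.vY (shift^[k] ⁻¹' A) ≤ E.P0 (E.Ym ⁻¹' (shift^[k] ⁻¹' A)) :=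
      v_le E.hfa E.hv E.P0_mem (E.qm_term_meas k hA)
    have h2 : E.vY (shift^[k] ⁻¹' A) = E.vY A := by
      have hc : E.VY ((shift^[k] ⁻¹' A)ᶜ) = E.VY Aᶜ := by
        rw [← Set.preimage_compl]
        exact E.VY_shift_iter k hA.compl
      rw [E.vY_eq ((measurable_shift.iterate k) hA), E.vY_eq hA, hc]
    linarith
  have hsum : ((m : ℝ) + 1) * E.vY A ≤
      ∑ k ∈ Finset.range (m + 1), E.P0 (E.Ym ⁻¹' (shift^[k] ⁻¹' A)) := by
    calc ((m : ℝ) + 1) * E.vY A = ∑ _k ∈ Finset.range (m + 1), E.vY A := by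
          rw [Finset.sum_const, Finset.card_range]; push_cast; ring
      _ ≤ _ := Finset.sum_le_sum hterm
  have hpos : (0 : ℝ) < (m : ℝ) + 1 := by positivity
  rw [qm]
  calc E.vY A = ((m : ℝ) + 1)⁻¹ * (((m : ℝ) + 1) * E.vY A) := by field_simp
    _ ≤ _ := by apply mul_le_mul_of_nonneg_left hsum (by positivity)

lemma qm_le_one (m : ℕ) {A : Set (ℕ → ℝ)} (hA : MeasurableSet A) : E.qm m A ≤ 1 :=
  le_trans (E.qm_le_VY m hA) (E.VY_le_one hA)

lemma qm_union (m : ℕ) {A B : Set (ℕ → ℝ)} (hA : MeasurableSet A) (hB : MeasurableSet B)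
    (hd : Disjoint A B) : E.qm m (A ∪ B) = E.qm m A + E.qm m B := by
  have hterm : ∀ k, E.P0 (E.Ym ⁻¹' (shift^[k] ⁻¹' (A ∪ B))) =
      E.P0 (E.Ym ⁻¹' (shift^[k] ⁻¹' A)) + E.P0 (E.Ym ⁻¹' (shift^[k] ⁻¹' B)) := by
    intro k
    rw [Set.preimage_union, Set.preimage_union]
    exact fa_union E.P0_fa (E.qm_term_meas k hA) (E.qm_term_meas k hB)
      (((hd.preimage _).preimage _))
  simp only [qm, hterm, Finset.sum_add_distrib]
  ring

lemma qm_univ (m : ℕ) : E.qm m Set.univ = 1 := by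
  have : ∀ k, E.P0 (E.Ym ⁻¹' (shift^[k] ⁻¹' (Set.univ : Set (ℕ → ℝ)))) = 1 := by
    intro k; simp [E.P0_fa.2.1]
  simp only [qm, this, Finset.sum_const, Finset.card_range, nsmul_eq_mul, mul_one]
  have hpos : ((m : ℝ) + 1) ≠ 0 := by positivity
  push_cast
  field_simp

lemma qm_empty (m : ℕ) : E.qm m ∅ = 0 := by
  have : ∀ k, E.P0 (E.Ym ⁻¹' (shift^[k] ⁻¹' (∅ : Set (ℕ → ℝ)))) = 0 := by
    intro k; simp [E.P0_fa.1]
  simp [qm, this, E.P0_fa.1]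

lemma qm_shift_close (m : ℕ) {A : Set (ℕ → ℝ)} (hA : MeasurableSet A) :
    |E.qm m (shift ⁻¹' A) - E.qm m A| ≤ 2 * ((m : ℝ) + 1)⁻¹ := by
  set a : ℕ → ℝ := fun k => E.P0 (E.Ym ⁻¹' (shift^[k] ⁻¹' A)) with ha
  have hiter : ∀ k, shift^[k] ⁻¹' (shift ⁻¹' A) = shift^[k + 1] ⁻¹' A := by
    intro k
    rw [Function.iterate_succ', Function.comp_def]
    rfl
  have hsum : ∑ k ∈ Finset.range (m + 1), E.P0 (E.Ym ⁻¹' (shift^[k] ⁻¹' (shift ⁻¹' A))) =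
      ∑ k ∈ Finset.range (m + 1), a (k + 1) := by
    apply Finset.sum_congr rfl
    intro k _
    rw [hiter k]
  have hshift : ∑ k ∈ Finset.range (m + 1), a (k + 1) =
      ∑ k ∈ Finset.range (m + 1), a k + a (m + 1) - a 0 := by
    have h1 := Finset.sum_range_succ' a (m + 1)
    have h2 := Finset.sum_range_succ a (m + 1)
    linarith
  have habs : ∀ k, 0 ≤ a k ∧ a k ≤ 1 := by
    intro k
    exact ⟨fa_nonneg E.P0_fa (E.qm_term_meas k hA), fa_le_one E.P0_fa (E.qm_term_meas k hA)⟩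
  have hq : E.qm m (shift ⁻¹' A) - E.qm m A = ((m : ℝ) + 1)⁻¹ * (a (m + 1) - a 0) := by
    rw [qm, qm, hsum, hshift]
    ring
  rw [hq, abs_mul]
  have h1 : |((m : ℝ) + 1)⁻¹| = ((m : ℝ) + 1)⁻¹ := abs_of_nonneg (by positivity)
  have h2 : |a (m + 1) - a 0| ≤ 2 := by
    have := habs (m + 1); have := habs 0
    rw [abs_sub_le_iff]
    constructor <;> linarith [(habs (m+1)).1, (habs (m+1)).2, (habs 0).1, (habs 0).2]
  rw [h1, mul_comm]
  calc |a (m + 1) - a 0| * ((m : ℝ) + 1)⁻¹ ≤ 2 * ((m : ℝ) + 1)⁻¹ := by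
        apply mul_le_mul_of_nonneg_right h2 (by positivity)
    _ = 2 * ((m : ℝ) + 1)⁻¹ := rfl

/-- The invariant "limit" set function along the ultrafilter. -/
noncomputable def Q0 (A : Set (ℕ → ℝ)) : ℝ := limUnder (UF : Filter ℕ) (fun m => E.qm m A)

lemma Q0_spec {A : Set (ℕ → ℝ)} (hA : MeasurableSet A) :
    Tendsto (fun m => E.qm m A) (UF : Filter ℕ) (nhds (E.Q0 A)) := by
  have hmem : ∀ m, E.qm m A ∈ Set.Icc (0 : ℝ) 1 :=
    fun m => ⟨E.qm_nonneg m hA, E.qm_le_one m hA⟩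
  have hle : (Ultrafilter.map (fun m => E.qm m A) UF : Filter ℝ) ≤ 𝓟 (Set.Icc (0 : ℝ) 1) := by
    rw [Ultrafilter.coe_map, Filter.le_principal_iff, Filter.mem_map]
    exact Filter.univ_mem' hmem
  obtain ⟨L, _, hconv⟩ := (isCompact_Icc (a := (0:ℝ)) (b := 1)).ultrafilter_le_nhds
    (Ultrafilter.map (fun m => E.qm m A) UF) hle
  rw [Ultrafilter.coe_map] at hconv
  have ht : Tendsto (fun m => E.qm m A) (UF : Filter ℕ) (nhds L) := hconv
  have hQL : E.Q0 A = L := ht.limUnder_eq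
  rw [hQL]
  exact ht

lemma Q0_nonneg {A : Set (ℕ → ℝ)} (hA : MeasurableSet A) : 0 ≤ E.Q0 A :=
  le_of_tendsto_of_tendsto' tendsto_const_nhds (E.Q0_spec hA) (fun m => E.qm_nonneg m hA)

lemma Q0_le_VY {A : Set (ℕ → ℝ)} (hA : MeasurableSet A) : E.Q0 A ≤ E.VY A :=
  le_of_tendsto_of_tendsto' (E.Q0_spec hA) tendsto_const_nhds (fun m => E.qm_le_VY m hA)

lemma vY_le_Q0 {A : Set (ℕ → ℝ)} (hA : MeasurableSet A) : E.vY A ≤ E.Q0 A :=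
  le_of_tendsto_of_tendsto' tendsto_const_nhds (E.Q0_spec hA) (fun m => E.vY_le_qm m hA)

lemma Q0_le_one {A : Set (ℕ → ℝ)} (hA : MeasurableSet A) : E.Q0 A ≤ 1 :=
  le_of_tendsto_of_tendsto' (E.Q0_spec hA) tendsto_const_nhds (fun m => E.qm_le_one m hA)

lemma Q0_union {A B : Set (ℕ → ℝ)} (hA : MeasurableSet A) (hB : MeasurableSet B)
    (hd : Disjoint A B) : E.Q0 (A ∪ B) = E.Q0 A + E.Q0 B := by
  have h1 : Tendsto (fun m => E.qm m (A ∪ B)) (UF : Filter ℕ) (nhds (E.Q0 A + E.Q0 B)) := by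
    have := (E.Q0_spec hA).add (E.Q0_spec hB)
    have heq : (fun m => E.qm m A + E.qm m B) = (fun m => E.qm m (A ∪ B)) := by
      funext m; rw [E.qm_union m hA hB hd]
    rwa [heq] at this
  exact tendsto_nhds_unique (E.Q0_spec (hA.union hB)) h1

lemma Q0_univ : E.Q0 Set.univ = 1 := by
  have h1 : Tendsto (fun m => E.qm m (Set.univ : Set (ℕ → ℝ))) (UF : Filter ℕ) (nhds 1) := by
    have heq : (fun m => E.qm m (Set.univ : Set (ℕ → ℝ))) = (fun _ => (1:ℝ)) := by
      funext m; exact E.qm_univ m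
    rw [heq]; exact tendsto_const_nhds
  exact tendsto_nhds_unique (E.Q0_spec MeasurableSet.univ) h1

lemma Q0_empty : E.Q0 (∅ : Set (ℕ → ℝ)) = 0 := by
  have h1 : Tendsto (fun m => E.qm m (∅ : Set (ℕ → ℝ))) (UF : Filter ℕ) (nhds 0) := by
    have heq : (fun m => E.qm m (∅ : Set (ℕ → ℝ))) = (fun _ => (0:ℝ)) := by
      funext m; exact E.qm_empty m
    rw [heq]; exact tendsto_const_nhds
  exact tendsto_nhds_unique (E.Q0_spec MeasurableSet.empty) h1

lemma Q0_shift {A : Set (ℕ → ℝ)} (hA : MeasurableSet A) : E.Q0 (shift ⁻¹' A) = E.Q0 A := by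
  have herr : Tendsto (fun m => E.qm m (shift ⁻¹' A) - E.qm m A) atTop (nhds 0) := by
    apply squeeze_zero_norm (fun m => E.qm_shift_close m hA)
    have h2 : Tendsto (fun m : ℕ => 2 * ((m : ℝ) + 1)⁻¹) atTop (nhds (2 * 0)) := by
      apply Tendsto.const_mul
      have := tendsto_one_div_add_atTop_nhds_zero_nat (𝕜 := ℝ)
      simpa [one_div] using this
    simpa using h2
  have herr' : Tendsto (fun m => E.qm m (shift ⁻¹' A) - E.qm m A) (UF : Filter ℕ) (nhds 0) :=
    herr.mono_left UF_le_atTop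
  have h1 : Tendsto (fun m => E.qm m (shift ⁻¹' A)) (UF : Filter ℕ) (nhds (E.Q0 A + 0)) := by
    have := (E.Q0_spec hA).add herr'
    have heq : (fun m => E.qm m A + (E.qm m (shift ⁻¹' A) - E.qm m A)) =
        (fun m => E.qm m (shift ⁻¹' A)) := by funext m; ring
    rwa [heq] at this
  rw [add_zero] at h1
  exact tendsto_nhds_unique (E.Q0_spec (measurable_shift hA)) h1


lemma Q0_mono {A B : Set (ℕ → ℝ)} (hA : MeasurableSet A) (hB : MeasurableSet B)
    (hAB : A ⊆ B) : E.Q0 A ≤ E.Q0 B := by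
  have hdiff : MeasurableSet (B \ A) := hB.diff hA
  have : E.Q0 B = E.Q0 A + E.Q0 (B \ A) := by
    rw [← E.Q0_union hA hdiff disjoint_sdiff_right, Set.union_diff_cancel hAB]
  rw [this]
  have := E.Q0_nonneg hdiff
  linarith

lemma Q0_partial_sum (f : ℕ → Set (ℕ → ℝ)) (hmeas : ∀ i, MeasurableSet (f i))
    (hdisj : Pairwise (Function.onFun Disjoint f)) (n : ℕ) :
    E.Q0 (⋃ i < n, f i) = ∑ i ∈ Finset.range n, E.Q0 (f i) := by
  induction n with
  | zero => simp [E.Q0_empty]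
  | succ n ih =>
    have hbi : (⋃ i < n + 1, f i) = (⋃ i < n, f i) ∪ f n := by
      ext x
      simp only [Set.mem_iUnion, Set.mem_union]
      constructor
      · rintro ⟨i, hi, hxi⟩
        rcases Nat.lt_succ_iff_lt_or_eq.1 hi with h | h
        · exact Or.inl ⟨i, h, hxi⟩
        · exact Or.inr (h ▸ hxi)
      · rintro (⟨i, hi, hxi⟩ | hx)
        · exact ⟨i, Nat.lt_succ_of_lt hi, hxi⟩
        · exact ⟨n, Nat.lt_succ_self n, hx⟩
    rw [hbi, Finset.sum_range_succ, ← ih]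
    have hU : MeasurableSet (⋃ i < n, f i) :=
      MeasurableSet.biUnion (Set.to_countable _) (fun i _ => hmeas i)
    apply E.Q0_union hU (hmeas n)
    rw [Set.disjoint_left]
    rintro x hx hxn
    simp only [Set.mem_iUnion] at hx
    obtain ⟨i, hi, hxi⟩ := hx
    exact Set.disjoint_left.1 (hdisj (Nat.ne_of_lt hi)) hxi hxn

lemma Q0_iUnion_tendsto (f : ℕ → Set (ℕ → ℝ)) (hmeas : ∀ i, MeasurableSet (f i))
    (hdisj : Pairwise (Function.onFun Disjoint f)) :
    Tendsto (fun n => ∑ i ∈ Finset.range n, E.Q0 (f i)) atTop (nhds (E.Q0 (⋃ i, f i))) := by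
  classical
  set tail : ℕ → Set (ℕ → ℝ) := fun n => ⋃ i, f (n + i) with htail
  have htail_meas : ∀ n, MeasurableSet (tail n) := fun n => MeasurableSet.iUnion (fun i => hmeas _)
  have hsplit : ∀ n, (⋃ i, f i) = (⋃ i < n, f i) ∪ tail n := by
    intro n
    ext x
    simp only [Set.mem_iUnion, Set.mem_union, htail]
    constructor
    · rintro ⟨i, hxi⟩
      rcases lt_or_ge i n with h | h
      · exact Or.inl ⟨i, h, hxi⟩
      · exact Or.inr ⟨i - n, by rwa [Nat.add_sub_cancel' h]⟩
    · rintro (⟨i, _, hxi⟩ | ⟨i, hxi⟩)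
      · exact ⟨i, hxi⟩
      · exact ⟨n + i, hxi⟩
  have hdisjn : ∀ n, Disjoint (⋃ i < n, f i) (tail n) := by
    intro n
    rw [Set.disjoint_left]
    rintro x hx hxt
    simp only [Set.mem_iUnion, htail] at hx hxt
    obtain ⟨i, hi, hxi⟩ := hx
    obtain ⟨j, hxj⟩ := hxt
    have : i ≠ n + j := by omega
    exact Set.disjoint_left.1 (hdisj this) hxi hxj
  have hdecomp : ∀ n, E.Q0 (⋃ i, f i) = (∑ i ∈ Finset.range n, E.Q0 (f i)) + E.Q0 (tail n) := by
    intro n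
    have hU : MeasurableSet (⋃ i < n, f i) :=
      MeasurableSet.biUnion (Set.to_countable _) (fun i _ => hmeas i)
    rw [hsplit n, E.Q0_union hU (htail_meas n) (hdisjn n), E.Q0_partial_sum f hmeas hdisj n]
  -- tail tends to zero
  have htail_anti : Antitone tail := by
    intro a b hab
    rintro x hx
    simp only [Set.mem_iUnion, htail] at hx ⊢
    obtain ⟨i, hxi⟩ := hx
    exact ⟨b - a + i, by rwa [show a + (b - a + i) = b + i by omega]⟩
  have htail_empty : (⋂ n, tail n) = ∅ := by
    ext x
    simp only [Set.mem_iInter, Set.mem_empty_iff_false, iff_false, htail]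
    intro hall
    obtain ⟨i, hxi⟩ := by simpa using hall 0
    obtain ⟨j, hxj⟩ := by simpa using hall (i + 1)
    have : i ≠ i + 1 + j := by omega
    exact Set.disjoint_left.1 (hdisj this) hxi hxj
  have hVtail : Tendsto (fun n => E.VY (tail n)) atTop (nhds 0) := by
    have := E.VY_tendsto_anti tail htail_meas htail_anti
    rwa [htail_empty, E.VY_empty] at this
  have hQtail : Tendsto (fun n => E.Q0 (tail n)) atTop (nhds 0) := by
    apply squeeze_zero (fun n => E.Q0_nonneg (htail_meas n))
      (fun n => E.Q0_le_VY (htail_meas n)) hVtail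
  have : Tendsto (fun n => E.Q0 (⋃ i, f i) - E.Q0 (tail n)) atTop
      (nhds (E.Q0 (⋃ i, f i) - 0)) := tendsto_const_nhds.sub hQtail
  rw [sub_zero] at this
  have heq : (fun n => E.Q0 (⋃ i, f i) - E.Q0 (tail n)) =
      (fun n => ∑ i ∈ Finset.range n, E.Q0 (f i)) := by
    funext n
    rw [hdecomp n]
    ring
  rwa [heq] at this

/-- The invariant probability measure on sequence space. -/
noncomputable def QM : Measure (ℕ → ℝ) :=
  Measure.ofMeasurable (fun A _ => ENNReal.ofReal (E.Q0 A))
    (by simp [E.Q0_empty])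
    (by
      intro f hmeas hdisj
      have hnn : ∀ i, 0 ≤ E.Q0 (f i) := fun i => E.Q0_nonneg (hmeas i)
      have hsummable : Summable (fun i => E.Q0 (f i)) := by
        apply summable_of_sum_range_le hnn
        intro n
        rw [← E.Q0_partial_sum f hmeas hdisj n]
        have hU : MeasurableSet (⋃ i < n, f i) :=
          MeasurableSet.biUnion (Set.to_countable _) (fun i _ => hmeas i)
        exact E.Q0_le_one hU
      have htsum : ∑' i, E.Q0 (f i) = E.Q0 (⋃ i, f i) :=
        tendsto_nhds_unique hsummable.hasSum.tendsto_sum_nat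
          (E.Q0_iUnion_tendsto f hmeas hdisj)
      show ENNReal.ofReal (E.Q0 (⋃ i, f i)) = ∑' i, ENNReal.ofReal (E.Q0 (f i))
      rw [← htsum, ENNReal.ofReal_tsum_of_nonneg hnn hsummable])

lemma QM_apply {A : Set (ℕ → ℝ)} (hA : MeasurableSet A) :
    E.QM A = ENNReal.ofReal (E.Q0 A) := Measure.ofMeasurable_apply A hA

instance QM_prob : IsProbabilityMeasure E.QM :=
  ⟨by rw [E.QM_apply MeasurableSet.univ, E.Q0_univ, ENNReal.ofReal_one]⟩

lemma QM_real {A : Set (ℕ → ℝ)} (hA : MeasurableSet A) :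
    (E.QM A).toReal = E.Q0 A := by
  rw [E.QM_apply hA, ENNReal.toReal_ofReal (E.Q0_nonneg hA)]

lemma QM_null {A : Set (ℕ → ℝ)} (hA : MeasurableSet A) (h : E.VY A = 0) : E.QM A = 0 := by
  rw [E.QM_apply hA]
  have h1 : E.Q0 A ≤ 0 := h ▸ E.Q0_le_VY hA
  have h2 := E.Q0_nonneg hA
  rw [le_antisymm h1 h2]
  simp

lemma QM_one {A : Set (ℕ → ℝ)} (hA : MeasurableSet A) (h : E.VY Aᶜ = 0) : E.QM A = 1 := by
  have := E.QM_null hA.compl h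
  rwa [prob_compl_eq_zero_iff hA] at this

lemma QM_shift_preserving : MeasurePreserving shift E.QM E.QM := by
  refine ⟨measurable_shift, ?_⟩
  apply Measure.ext
  intro s hs
  rw [Measure.map_apply measurable_shift hs, E.QM_apply (measurable_shift hs), E.QM_apply hs,
    E.Q0_shift hs]


/-! ### Clamped averages and level sets -/

noncomputable def cl : ℝ → ℝ := fun a => max (-E.M) (min a E.M)

lemma cl_continuous : Continuous E.cl :=
  continuous_const.max (continuous_id.min continuous_const)

lemma cl_abs (a : ℝ) : |E.cl a| ≤ E.M := by
  rw [abs_le]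
  constructor
  · exact le_max_left _ _
  · apply max_le
    · linarith [E.hM0]
    · exact min_le_right _ _

lemma cl_eq {a : ℝ} (h : |a| ≤ E.M) : E.cl a = a := by
  rw [abs_le] at h
  rw [cl, min_eq_left h.2, max_eq_right h.1]

noncomputable def avg (n : ℕ) (x : ℕ → ℝ) : ℝ :=
  (1 / (n : ℝ)) * ∑ k ∈ Finset.range n, E.cl (x k)

lemma avg_meas (n : ℕ) : Measurable (E.avg n) := by
  apply Measurable.const_mul
  apply Finset.measurable_sum
  intro k _
  exact E.cl_continuous.measurable.comp (measurable_pi_apply k)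

lemma avg_abs (n : ℕ) (hn : 1 ≤ n) (x : ℕ → ℝ) : |E.avg n x| ≤ E.M := by
  have hn0 : (0 : ℝ) < (n : ℝ) := by exact_mod_cast hn
  have h1 : |∑ k ∈ Finset.range n, E.cl (x k)| ≤ (n : ℝ) * E.M := by
    calc |∑ k ∈ Finset.range n, E.cl (x k)| ≤ ∑ k ∈ Finset.range n, |E.cl (x k)| :=
          Finset.abs_sum_le_sum_abs _ _
      _ ≤ ∑ _k ∈ Finset.range n, E.M := Finset.sum_le_sum (fun k _ => E.cl_abs _)
      _ = (n : ℝ) * E.M := by rw [Finset.sum_const, Finset.card_range, nsmul_eq_mul]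
  rw [avg, abs_mul, abs_of_nonneg (by positivity : (0:ℝ) ≤ 1 / (n:ℝ))]
  calc (1 / (n : ℝ)) * |∑ k ∈ Finset.range n, E.cl (x k)| ≤ (1 / (n:ℝ)) * ((n:ℝ) * E.M) := by
        apply mul_le_mul_of_nonneg_left h1 (by positivity)
    _ = E.M := by field_simp

lemma avg_shift_close (x : ℕ → ℝ) (n : ℕ) (hn : 1 ≤ n) :
    |E.avg n (shift x) - E.avg (n + 1) x| ≤ 2 * E.M / n := by
  have hn0 : (0 : ℝ) < (n : ℝ) := by exact_mod_cast hn
  have hn1 : (0 : ℝ) < (n : ℝ) + 1 := by positivity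
  have hsum : ∑ k ∈ Finset.range n, E.cl (shift x k) =
      (∑ k ∈ Finset.range (n + 1), E.cl (x k)) - E.cl (x 0) := by
    rw [Finset.sum_range_succ' (fun k => E.cl (x k)) n]
    simp [shift]
  have key : (n : ℝ) * (E.avg n (shift x) - E.avg (n + 1) x) =
      E.avg (n + 1) x - E.cl (x 0) := by
    rw [avg, avg, hsum]
    push_cast
    field_simp
    ring
  have hdiff : E.avg n (shift x) - E.avg (n + 1) x = (E.avg (n + 1) x - E.cl (x 0)) / n := by
    rw [eq_div_iff hn0.ne']
    linarith [key]
  have hnum : |E.avg (n + 1) x - E.cl (x 0)| ≤ 2 * E.M := by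
    calc |E.avg (n + 1) x - E.cl (x 0)| ≤ |E.avg (n + 1) x| + |E.cl (x 0)| := abs_sub _ _
      _ ≤ E.M + E.M := add_le_add (E.avg_abs (n + 1) (by omega) x) (E.cl_abs _)
      _ = 2 * E.M := by ring
  rw [hdiff, abs_div, abs_of_pos hn0]
  gcongr

def UpSet (q : ℝ) : Set (ℕ → ℝ) := {x | ∀ N : ℕ, ∃ n, N ≤ n ∧ 1 ≤ n ∧ q ≤ E.avg n x}

def DnSet (q : ℝ) : Set (ℕ → ℝ) := {x | ∀ N : ℕ, ∃ n, N ≤ n ∧ 1 ≤ n ∧ E.avg n x ≤ q}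

noncomputable def eps : ℕ → ℝ := fun j => 1 / ((j : ℝ) + 1)

lemma eps_pos (j : ℕ) : 0 < eps j := by
  rw [eps]; positivity

lemma eps_le_one (j : ℕ) : eps j ≤ 1 := by
  rw [eps]
  rw [div_le_one (by positivity)]
  linarith [Nat.cast_nonneg (α := ℝ) j]

lemma eps_half (j : ℕ) : eps (2 * j + 1) = eps j / 2 := by
  rw [eps, eps]
  push_cast
  rw [div_div]
  congr 1
  ring

def Bq (q : ℝ) : Set (ℕ → ℝ) := ⋂ j : ℕ, E.UpSet (q - eps j)

def Dq (q : ℝ) : Set (ℕ → ℝ) := ⋂ j : ℕ, E.DnSet (q + eps j)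

lemma UpSet_meas (q : ℝ) : MeasurableSet (E.UpSet q) := by
  have heq : E.UpSet q = ⋂ N : ℕ, ⋃ n : ℕ, {x | N ≤ n ∧ 1 ≤ n ∧ q ≤ E.avg n x} := by
    ext x
    simp only [UpSet, Set.mem_setOf_eq, Set.mem_iInter, Set.mem_iUnion]
  rw [heq]
  apply MeasurableSet.iInter
  intro N
  apply MeasurableSet.iUnion
  intro n
  by_cases hc : N ≤ n ∧ 1 ≤ n
  · have : {x : ℕ → ℝ | N ≤ n ∧ 1 ≤ n ∧ q ≤ E.avg n x} = {x | q ≤ E.avg n x} := by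
      ext x; simp [hc.1, hc.2]
    rw [this]
    exact measurableSet_le measurable_const (E.avg_meas n)
  · have : {x : ℕ → ℝ | N ≤ n ∧ 1 ≤ n ∧ q ≤ E.avg n x} = ∅ := by
      ext x; simp only [Set.mem_setOf_eq, Set.mem_empty_iff_false, iff_false]
      tauto
    rw [this]
    exact MeasurableSet.empty

lemma DnSet_meas (q : ℝ) : MeasurableSet (E.DnSet q) := by
  have heq : E.DnSet q = ⋂ N : ℕ, ⋃ n : ℕ, {x | N ≤ n ∧ 1 ≤ n ∧ E.avg n x ≤ q} := by
    ext x
    simp only [DnSet, Set.mem_setOf_eq, Set.mem_iInter, Set.mem_iUnion]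
  rw [heq]
  apply MeasurableSet.iInter
  intro N
  apply MeasurableSet.iUnion
  intro n
  by_cases hc : N ≤ n ∧ 1 ≤ n
  · have : {x : ℕ → ℝ | N ≤ n ∧ 1 ≤ n ∧ E.avg n x ≤ q} = {x | E.avg n x ≤ q} := by
      ext x; simp [hc.1, hc.2]
    rw [this]
    exact measurableSet_le (E.avg_meas n) measurable_const
  · have : {x : ℕ → ℝ | N ≤ n ∧ 1 ≤ n ∧ E.avg n x ≤ q} = ∅ := by
      ext x; simp only [Set.mem_setOf_eq, Set.mem_empty_iff_false, iff_false]
      tauto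
    rw [this]
    exact MeasurableSet.empty

lemma Bq_meas (q : ℝ) : MeasurableSet (E.Bq q) :=
  MeasurableSet.iInter (fun j => E.UpSet_meas _)

lemma Dq_meas (q : ℝ) : MeasurableSet (E.Dq q) :=
  MeasurableSet.iInter (fun j => E.DnSet_meas _)

lemma UpSet_anti {q q' : ℝ} (h : q ≤ q') : E.UpSet q' ⊆ E.UpSet q := by
  intro x hx N
  obtain ⟨n, h1, h2, h3⟩ := hx N
  exact ⟨n, h1, h2, le_trans h h3⟩

lemma DnSet_mono {q q' : ℝ} (h : q ≤ q') : E.DnSet q ⊆ E.DnSet q' := by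
  intro x hx N
  obtain ⟨n, h1, h2, h3⟩ := hx N
  exact ⟨n, h1, h2, le_trans h3 h⟩

lemma Bq_anti {q q' : ℝ} (h : q ≤ q') : E.Bq q' ⊆ E.Bq q := by
  apply Set.iInter_mono
  intro j
  exact E.UpSet_anti (by linarith)

lemma Dq_mono {q q' : ℝ} (h : q ≤ q') : E.Dq q ⊆ E.Dq q' := by
  apply Set.iInter_mono
  intro j
  exact E.DnSet_mono (by linarith)

lemma UpSet_subset_Bq (q : ℝ) : E.UpSet q ⊆ E.Bq q := by
  apply Set.subset_iInter
  intro j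
  exact E.UpSet_anti (by linarith [eps_pos j])

lemma DnSet_subset_Dq (q : ℝ) : E.DnSet q ⊆ E.Dq q := by
  apply Set.subset_iInter
  intro j
  exact E.DnSet_mono (by linarith [eps_pos j])

lemma exists_K (j : ℕ) : ∃ K : ℕ, 1 ≤ K ∧ ∀ n : ℕ, K ≤ n → 2 * E.M / (n : ℝ) ≤ eps j / 2 := by
  obtain ⟨K₀, hK₀⟩ := exists_nat_gt (4 * E.M / eps j)
  refine ⟨max K₀ 1, le_max_right _ _, ?_⟩
  intro n hn
  have hn1 : 1 ≤ n := le_trans (le_max_right K₀ 1) hn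
  have hn0 : (0 : ℝ) < (n : ℝ) := by exact_mod_cast hn1
  have hKn : (K₀ : ℝ) ≤ (n : ℝ) := by
    exact_mod_cast le_trans (le_max_left K₀ 1) hn
  have h4M : 4 * E.M < eps j * K₀ := by
    rw [div_lt_iff₀ (eps_pos j)] at hK₀
    linarith
  rw [div_le_div_iff₀ hn0 (by norm_num : (0:ℝ) < 2)]
  have : eps j * (K₀ : ℝ) ≤ eps j * (n : ℝ) :=
    mul_le_mul_of_nonneg_left hKn (le_of_lt (eps_pos j))
  linarith

lemma Bq_inv (q : ℝ) : shift ⁻¹' (E.Bq q) = E.Bq q := by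
  have hfwd : ∀ x, x ∈ E.Bq q → shift x ∈ E.Bq q := by
    intro x hx
    simp only [Bq, Set.mem_iInter, UpSet, Set.mem_setOf_eq] at hx ⊢
    intro j N
    obtain ⟨K, hK1, hKspec⟩ := E.exists_K j
    obtain ⟨n, hn1, hn2, hn3⟩ := hx (2 * j + 1) (max (N + 1) (K + 1))
    have hnN : N + 1 ≤ n := le_trans (le_max_left _ _) hn1
    have hnK : K + 1 ≤ n := le_trans (le_max_right _ _) hn1
    obtain ⟨m, rfl⟩ : ∃ m, n = m + 1 := ⟨n - 1, by omega⟩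
    have hm1 : 1 ≤ m := by omega
    have hmK : K ≤ m := by omega
    refine ⟨m, by omega, hm1, ?_⟩
    have hclose := abs_sub_le_iff.1 (E.avg_shift_close x m hm1)
    have hbound := hKspec m hmK
    rw [eps_half] at hn3
    linarith [hclose.1, hclose.2]
  have hbwd : ∀ x, shift x ∈ E.Bq q → x ∈ E.Bq q := by
    intro x hx
    simp only [Bq, Set.mem_iInter, UpSet, Set.mem_setOf_eq] at hx ⊢
    intro j N
    obtain ⟨K, hK1, hKspec⟩ := E.exists_K j
    obtain ⟨n, hn1, hn2, hn3⟩ := hx (2 * j + 1) (max N K)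
    have hnN : N ≤ n := le_trans (le_max_left _ _) hn1
    have hnK : K ≤ n := le_trans (le_max_right _ _) hn1
    refine ⟨n + 1, by omega, by omega, ?_⟩
    have hclose := abs_sub_le_iff.1 (E.avg_shift_close x n hn2)
    have hbound := hKspec n hnK
    rw [eps_half] at hn3
    linarith [hclose.1, hclose.2]
  ext x
  rw [Set.mem_preimage]
  exact ⟨hbwd x, hfwd x⟩

lemma Dq_inv (q : ℝ) : shift ⁻¹' (E.Dq q) = E.Dq q := by
  have hfwd : ∀ x, x ∈ E.Dq q → shift x ∈ E.Dq q := by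
    intro x hx
    simp only [Dq, Set.mem_iInter, DnSet, Set.mem_setOf_eq] at hx ⊢
    intro j N
    obtain ⟨K, hK1, hKspec⟩ := E.exists_K j
    obtain ⟨n, hn1, hn2, hn3⟩ := hx (2 * j + 1) (max (N + 1) (K + 1))
    have hnN : N + 1 ≤ n := le_trans (le_max_left _ _) hn1
    have hnK : K + 1 ≤ n := le_trans (le_max_right _ _) hn1
    obtain ⟨m, rfl⟩ : ∃ m, n = m + 1 := ⟨n - 1, by omega⟩
    have hm1 : 1 ≤ m := by omega
    have hmK : K ≤ m := by omega
    refine ⟨m, by omega, hm1, ?_⟩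
    have hclose := abs_sub_le_iff.1 (E.avg_shift_close x m hm1)
    have hbound := hKspec m hmK
    rw [eps_half] at hn3
    linarith [hclose.1, hclose.2]
  have hbwd : ∀ x, shift x ∈ E.Dq q → x ∈ E.Dq q := by
    intro x hx
    simp only [Dq, Set.mem_iInter, DnSet, Set.mem_setOf_eq] at hx ⊢
    intro j N
    obtain ⟨K, hK1, hKspec⟩ := E.exists_K j
    obtain ⟨n, hn1, hn2, hn3⟩ := hx (2 * j + 1) (max N K)
    have hnN : N ≤ n := le_trans (le_max_left _ _) hn1
    have hnK : K ≤ n := le_trans (le_max_right _ _) hn1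
    refine ⟨n + 1, by omega, by omega, ?_⟩
    have hclose := abs_sub_le_iff.1 (E.avg_shift_close x n hn2)
    have hbound := hKspec n hnK
    rw [eps_half] at hn3
    linarith [hclose.1, hclose.2]
  ext x
  rw [Set.mem_preimage]
  exact ⟨hbwd x, hfwd x⟩

/-! ### The ergodic thresholds -/

def SbarSet : Set ℝ := {q | E.VY (E.Bq q) = 1}

def SlowSet : Set ℝ := {q | E.VY (E.Dq q) = 1}

noncomputable def cbar : ℝ := sSup E.SbarSet

noncomputable def clow : ℝ := sInf E.SlowSet

lemma eps_zero : eps 0 = 1 := by norm_num [eps]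

lemma Bq_neg_M : E.Bq (-E.M) = Set.univ := by
  ext x
  simp only [Bq, Set.mem_iInter, UpSet, Set.mem_setOf_eq, Set.mem_univ, iff_true]
  intro j N
  refine ⟨max N 1, le_max_left _ _, le_max_right _ _, ?_⟩
  have h := abs_le.1 (E.avg_abs (max N 1) (le_max_right _ _) x)
  linarith [eps_pos j, h.1]

lemma Dq_M : E.Dq E.M = Set.univ := by
  ext x
  simp only [Dq, Set.mem_iInter, DnSet, Set.mem_setOf_eq, Set.mem_univ, iff_true]
  intro j N
  refine ⟨max N 1, le_max_left _ _, le_max_right _ _, ?_⟩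
  have h := abs_le.1 (E.avg_abs (max N 1) (le_max_right _ _) x)
  linarith [eps_pos j, h.2]

lemma Sbar_nonempty : E.SbarSet.Nonempty := by
  refine ⟨-E.M, ?_⟩
  rw [SbarSet, Set.mem_setOf_eq, E.Bq_neg_M]
  exact E.VY_univ

lemma Slow_nonempty : E.SlowSet.Nonempty := by
  refine ⟨E.M, ?_⟩
  rw [SlowSet, Set.mem_setOf_eq, E.Dq_M]
  exact E.VY_univ

lemma Sbar_bddAbove : BddAbove E.SbarSet := by
  refine ⟨E.M + 1, ?_⟩
  intro q hq
  by_contra hlt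
  push_neg at hlt
  have hempty : E.Bq q = ∅ := by
    ext x
    simp only [Bq, Set.mem_iInter, UpSet, Set.mem_setOf_eq, Set.mem_empty_iff_false, iff_false]
    intro hx
    obtain ⟨n, _, hn2, hn3⟩ := hx 0 1
    rw [eps_zero] at hn3
    have h := abs_le.1 (E.avg_abs n hn2 x)
    linarith [h.2]
  rw [SbarSet, Set.mem_setOf_eq, hempty, E.VY_empty] at hq
  norm_num at hq

lemma Slow_bddBelow : BddBelow E.SlowSet := by
  refine ⟨-(E.M + 1), ?_⟩
  intro q hq
  by_contra hlt
  push_neg at hlt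
  have hempty : E.Dq q = ∅ := by
    ext x
    simp only [Dq, Set.mem_iInter, DnSet, Set.mem_setOf_eq, Set.mem_empty_iff_false, iff_false]
    intro hx
    obtain ⟨n, _, hn2, hn3⟩ := hx 0 1
    rw [eps_zero] at hn3
    have h := abs_le.1 (E.avg_abs n hn2 x)
    linarith [h.1]
  rw [SlowSet, Set.mem_setOf_eq, hempty, E.VY_empty] at hq
  norm_num at hq

lemma herg_apply {B : Set (ℕ → ℝ)} (hB : MeasurableSet B) (hinv : shift ⁻¹' B = B) :
    (E.VY B = 0 ∨ E.VY B = 1) ∧ (E.VY B = 0 ∨ E.VY Bᶜ = 0) :=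
  E.herg B hB hinv

lemma VY_Bq_zero {q : ℝ} (h : E.cbar < q) : E.VY (E.Bq q) = 0 := by
  rcases (E.herg_apply (E.Bq_meas q) (E.Bq_inv q)).1 with h0 | h1
  · exact h0
  · exfalso
    have : q ≤ E.cbar := le_csSup E.Sbar_bddAbove h1
    linarith

lemma VY_Bq_compl_zero {q : ℝ} (h : q < E.cbar) : E.VY ((E.Bq q)ᶜ) = 0 := by
  obtain ⟨q', hq'mem, hq'⟩ := exists_lt_of_lt_csSup E.Sbar_nonempty h
  rcases (E.herg_apply (E.Bq_meas q') (E.Bq_inv q')).2 with h0 | h1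
  · exfalso
    rw [SbarSet, Set.mem_setOf_eq] at hq'mem
    rw [hq'mem] at h0
    norm_num at h0
  · have hsub : (E.Bq q)ᶜ ⊆ (E.Bq q')ᶜ := Set.compl_subset_compl.2 (E.Bq_anti hq'.le)
    have h2 : E.VY ((E.Bq q)ᶜ) ≤ E.VY ((E.Bq q')ᶜ) :=
      E.VY_mono (E.Bq_meas q).compl (E.Bq_meas q').compl hsub
    have h3 := E.VY_nonneg (E.Bq_meas q).compl
    linarith [h1 ▸ h2]

lemma VY_Dq_compl_zero {q : ℝ} (h : E.clow < q) : E.VY ((E.Dq q)ᶜ) = 0 := by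
  obtain ⟨q', hq'mem, hq'⟩ := exists_lt_of_csInf_lt E.Slow_nonempty h
  rcases (E.herg_apply (E.Dq_meas q') (E.Dq_inv q')).2 with h0 | h1
  · exfalso
    rw [SlowSet, Set.mem_setOf_eq] at hq'mem
    rw [hq'mem] at h0
    norm_num at h0
  · have hsub : (E.Dq q)ᶜ ⊆ (E.Dq q')ᶜ := Set.compl_subset_compl.2 (E.Dq_mono hq'.le)
    have h2 : E.VY ((E.Dq q)ᶜ) ≤ E.VY ((E.Dq q')ᶜ) :=
      E.VY_mono (E.Dq_meas q).compl (E.Dq_meas q').compl hsub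
    have h3 := E.VY_nonneg (E.Dq_meas q).compl
    linarith [h1 ▸ h2]

lemma VY_Dq_zero {q : ℝ} (h : q < E.clow) : E.VY (E.Dq q) = 0 := by
  rcases (E.herg_apply (E.Dq_meas q) (E.Dq_inv q)).1 with h0 | h1
  · exact h0
  · exfalso
    have : E.clow ≤ q := csInf_le E.Slow_bddBelow h1
    linarith


/-! ### Applying the maximal ergodic theorem -/

lemma shift_iter (j : ℕ) (x : ℕ → ℝ) (i : ℕ) : shift^[j] x i = x (i + j) := by
  induction j generalizing x with
  | zero => simp
  | succ j ih =>
    rw [Function.iterate_succ_apply, ih (shift x)]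
    rfl

lemma cl0_meas : Measurable (fun x : ℕ → ℝ => E.cl (x 0)) :=
  E.cl_continuous.measurable.comp (measurable_pi_apply 0)

lemma cl0_abs (x : ℕ → ℝ) : |E.cl (x 0)| ≤ E.M := E.cl_abs _

/-- The candidate limit constant. -/
noncomputable def cC : ℝ := ∫ x, E.cl (x 0) ∂E.QM

lemma birkS_eq_avg (b : ℝ) (n : ℕ) (x : ℕ → ℝ) :
    birkS shift (fun y => E.cl (y 0) - b) n x =
      (n : ℝ) * E.avg n x - n * b := by
  have h1 : ∀ j, (fun y => E.cl (y 0) - b) (shift^[j] x) = E.cl (x j) - b := by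
    intro j
    simp only []
    rw [shift_iter j x 0, Nat.zero_add]
  rw [birkS]
  simp only [h1]
  rw [Finset.sum_sub_distrib, Finset.sum_const, Finset.card_range, nsmul_eq_mul]
  rcases Nat.eq_zero_or_pos n with h | h
  · subst h; simp [avg]
  · have hn0 : ((n : ℝ)) ≠ 0 := by positivity
    rw [avg]
    field_simp

lemma birkS_nonneg_iff (b : ℝ) (n : ℕ) (hn : 1 ≤ n) (x : ℕ → ℝ) :
    0 ≤ birkS shift (fun y => E.cl (y 0) - b) n x ↔ b ≤ E.avg n x := by
  rw [E.birkS_eq_avg b n x]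
  have hn0 : (0:ℝ) < (n:ℝ) := by exact_mod_cast hn
  constructor
  · intro h
    nlinarith
  · intro h
    nlinarith

lemma integral_cl0_ge {b : ℝ} (hb : E.QM {x | ∃ n, 1 ≤ n ∧ b ≤ E.avg n x} = 1) :
    b ≤ E.cC := by
  have hfm : Measurable (fun y : ℕ → ℝ => E.cl (y 0) - b) :=
    E.cl0_meas.sub measurable_const
  have hC : ∀ y : ℕ → ℝ, |E.cl (y 0) - b| ≤ E.M + |b| := by
    intro y
    calc |E.cl (y 0) - b| ≤ |E.cl (y 0)| + |b| := abs_sub _ _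
      _ ≤ E.M + |b| := by linarith [E.cl0_abs y]
  have hC0 : 0 ≤ E.M + |b| := add_nonneg E.hM0 (abs_nonneg b)
  have hseteq : {x : ℕ → ℝ | ∃ n, 1 ≤ n ∧ 0 ≤ birkS shift (fun y => E.cl (y 0) - b) n x} =
      {x | ∃ n, 1 ≤ n ∧ b ≤ E.avg n x} := by
    ext x
    simp only [Set.mem_setOf_eq]
    constructor
    · rintro ⟨n, hn1, hn2⟩
      exact ⟨n, hn1, (E.birkS_nonneg_iff b n hn1 x).1 hn2⟩
    · rintro ⟨n, hn1, hn2⟩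
      exact ⟨n, hn1, (E.birkS_nonneg_iff b n hn1 x).2 hn2⟩
  have hE : E.QM {x | ∃ n, 1 ≤ n ∧ 0 ≤ birkS shift (fun y => E.cl (y 0) - b) n x} = 1 := by
    rw [hseteq]; exact hb
  have h0 := maximal_ergodic E.QM E.QM_shift_preserving hfm hC0 hC hE
  have hint : Integrable (fun y : ℕ → ℝ => E.cl (y 0)) E.QM :=
    integrable_of_bounded E.cl0_meas E.cl0_abs
  rw [integral_sub hint (integrable_const b), integral_const] at h0
  simp only [Measure.real, measure_univ, ENNReal.toReal_one, one_smul] at h0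
  rw [cC]
  linarith

lemma integral_cl0_le {b : ℝ} (hb : E.QM {x | ∃ n, 1 ≤ n ∧ E.avg n x ≤ b} = 1) :
    E.cC ≤ b := by
  have hfm : Measurable (fun y : ℕ → ℝ => b - E.cl (y 0)) :=
    measurable_const.sub E.cl0_meas
  have hC : ∀ y : ℕ → ℝ, |b - E.cl (y 0)| ≤ E.M + |b| := by
    intro y
    calc |b - E.cl (y 0)| ≤ |b| + |E.cl (y 0)| := abs_sub _ _
      _ ≤ E.M + |b| := by linarith [E.cl0_abs y]
  have hC0 : 0 ≤ E.M + |b| := add_nonneg E.hM0 (abs_nonneg b)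
  have hbirk : ∀ n x, birkS shift (fun y => b - E.cl (y 0)) n x =
      - birkS shift (fun y => E.cl (y 0) - b) n x := by
    intro n x
    rw [birkS, birkS, ← Finset.sum_neg_distrib]
    apply Finset.sum_congr rfl
    intro j _
    ring
  have hseteq : {x : ℕ → ℝ | ∃ n, 1 ≤ n ∧ 0 ≤ birkS shift (fun y => b - E.cl (y 0)) n x} =
      {x | ∃ n, 1 ≤ n ∧ E.avg n x ≤ b} := by
    ext x
    simp only [Set.mem_setOf_eq]
    constructor
    · rintro ⟨n, hn1, hn2⟩
      refine ⟨n, hn1, ?_⟩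
      rw [hbirk n x] at hn2
      have h3 : birkS shift (fun y => E.cl (y 0) - b) n x ≤ 0 := by linarith
      rw [E.birkS_eq_avg b n x] at h3
      have hn0 : (0:ℝ) < (n:ℝ) := by exact_mod_cast hn1
      nlinarith
    · rintro ⟨n, hn1, hn2⟩
      refine ⟨n, hn1, ?_⟩
      rw [hbirk n x, E.birkS_eq_avg b n x]
      have hn0 : (0:ℝ) < (n:ℝ) := by exact_mod_cast hn1
      nlinarith
  have hE : E.QM {x | ∃ n, 1 ≤ n ∧ 0 ≤ birkS shift (fun y => b - E.cl (y 0)) n x} = 1 := by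
    rw [hseteq]; exact hb
  have h0 := maximal_ergodic E.QM E.QM_shift_preserving hfm hC0 hC hE
  have hint : Integrable (fun y : ℕ → ℝ => E.cl (y 0)) E.QM :=
    integrable_of_bounded E.cl0_meas E.cl0_abs
  rw [integral_sub (integrable_const b) hint, integral_const] at h0
  simp only [Measure.real, measure_univ, ENNReal.toReal_one, one_smul] at h0
  rw [cC]
  linarith

lemma QM_Bq_one {q : ℝ} (hq : q < E.cbar) : E.QM (E.Bq q) = 1 :=
  E.QM_one (E.Bq_meas q) (E.VY_Bq_compl_zero hq)

lemma QM_Dq_one {q : ℝ} (hq : E.clow < q) : E.QM (E.Dq q) = 1 :=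
  E.QM_one (E.Dq_meas q) (E.VY_Dq_compl_zero hq)

lemma exists_eps_le {ε : ℝ} (hε : 0 < ε) : ∃ j : ℕ, eps j ≤ ε := by
  obtain ⟨j, hj⟩ := exists_nat_gt (1 / ε)
  refine ⟨j, ?_⟩
  rw [eps, div_le_iff₀ (by positivity)]
  rw [div_lt_iff₀ hε] at hj
  nlinarith [hj, hε]

lemma cbar_le_cC : E.cbar ≤ E.cC := by
  apply le_of_forall_pos_le_add
  intro ε hε
  obtain ⟨j, hj⟩ := exists_eps_le (show (0:ℝ) < ε / 2 by linarith)
  have hq : E.cbar - ε / 2 < E.cbar := by linarith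
  have h1 : E.QM (E.Bq (E.cbar - ε / 2)) = 1 := E.QM_Bq_one hq
  have hsub : E.Bq (E.cbar - ε / 2) ⊆ {x | ∃ n, 1 ≤ n ∧ E.cbar - ε ≤ E.avg n x} := by
    intro x hx
    have hx' := Set.mem_iInter.1 hx j 
    obtain ⟨n, _, hn2, hn3⟩ := hx' 1
    exact ⟨n, hn2, by linarith⟩
  have hQ : E.QM {x | ∃ n, 1 ≤ n ∧ E.cbar - ε ≤ E.avg n x} = 1 := by
    apply le_antisymm prob_le_one
    calc (1 : ENNReal) = E.QM (E.Bq (E.cbar - ε / 2)) := h1.symm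
      _ ≤ _ := measure_mono hsub
  have := E.integral_cl0_ge hQ
  linarith

lemma cC_le_clow : E.cC ≤ E.clow := by
  apply le_of_forall_pos_le_add
  intro ε hε
  obtain ⟨j, hj⟩ := exists_eps_le (show (0:ℝ) < ε / 2 by linarith)
  have hq : E.clow < E.clow + ε / 2 := by linarith
  have h1 : E.QM (E.Dq (E.clow + ε / 2)) = 1 := E.QM_Dq_one hq
  have hsub : E.Dq (E.clow + ε / 2) ⊆ {x | ∃ n, 1 ≤ n ∧ E.avg n x ≤ E.clow + ε} := by
    intro x hx
    have hx' := Set.mem_iInter.1 hx j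
    obtain ⟨n, _, hn2, hn3⟩ := hx' 1
    exact ⟨n, hn2, by linarith⟩
  have hQ : E.QM {x | ∃ n, 1 ≤ n ∧ E.avg n x ≤ E.clow + ε} = 1 := by
    apply le_antisymm prob_le_one
    calc (1 : ENNReal) = E.QM (E.Dq (E.clow + ε / 2)) := h1.symm
      _ ≤ _ := measure_mono hsub
  have := E.integral_cl0_le hQ
  linarith


/-! ### The almost sure convergence -/

lemma eps_anti : Antitone eps := by
  intro j j' hj
  rw [eps, eps]
  apply one_div_le_one_div_of_le (by positivity)
  have : (j : ℝ) ≤ (j' : ℝ) := by exact_mod_cast hj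
  linarith

lemma VY_F_zero (j : ℕ) :
    E.VY (E.UpSet (E.cC + eps j) ∪ E.DnSet (E.cC - eps j)) = 0 := by
  have h1 : E.VY (E.UpSet (E.cC + eps j)) = 0 := by
    apply le_antisymm
    · calc E.VY (E.UpSet (E.cC + eps j)) ≤ E.VY (E.Bq (E.cC + eps j)) :=
            E.VY_mono (E.UpSet_meas _) (E.Bq_meas _) (E.UpSet_subset_Bq _)
        _ = 0 := E.VY_Bq_zero (by linarith [E.cbar_le_cC, eps_pos j])
    · exact E.VY_nonneg (E.UpSet_meas _)
  have h2 : E.VY (E.DnSet (E.cC - eps j)) = 0 := by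
    apply le_antisymm
    · calc E.VY (E.DnSet (E.cC - eps j)) ≤ E.VY (E.Dq (E.cC - eps j)) :=
            E.VY_mono (E.DnSet_meas _) (E.Dq_meas _) (E.DnSet_subset_Dq _)
        _ = 0 := E.VY_Dq_zero (by linarith [E.cC_le_clow, eps_pos j])
    · exact E.VY_nonneg (E.DnSet_meas _)
  apply le_antisymm
  · calc E.VY (E.UpSet (E.cC + eps j) ∪ E.DnSet (E.cC - eps j)) ≤
        E.VY (E.UpSet (E.cC + eps j)) + E.VY (E.DnSet (E.cC - eps j)) :=
          E.VY_union_le (E.UpSet_meas _) (E.DnSet_meas _)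
      _ = 0 := by rw [h1, h2]; ring
  · exact E.VY_nonneg ((E.UpSet_meas _).union (E.DnSet_meas _))

lemma VY_badUnion : E.VY (⋃ j : ℕ, (E.UpSet (E.cC + eps j) ∪ E.DnSet (E.cC - eps j))) = 0 := by
  have hmono : Monotone (fun j : ℕ => E.UpSet (E.cC + eps j) ∪ E.DnSet (E.cC - eps j)) := by
    intro a b hab
    apply Set.union_subset_union
    · exact E.UpSet_anti (by linarith [eps_anti hab])
    · exact E.DnSet_mono (by linarith [eps_anti hab])
  have ht := E.VY_tendsto_mono _ (fun j => (E.UpSet_meas _).union (E.DnSet_meas _)) hmono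
  have heq : (fun j : ℕ => E.VY (E.UpSet (E.cC + eps j) ∪ E.DnSet (E.cC - eps j))) =
      (fun _ : ℕ => (0:ℝ)) := by
    funext j; exact E.VY_F_zero j
  rw [heq] at ht
  exact tendsto_nhds_unique ht tendsto_const_nhds

lemma not_tendsto_subset :
    {x : ℕ → ℝ | ¬ Tendsto (fun n => E.avg n x) atTop (nhds E.cC)} ⊆
      ⋃ j : ℕ, (E.UpSet (E.cC + eps j) ∪ E.DnSet (E.cC - eps j)) := by
  intro x hx
  by_contra hnot
  apply hx
  simp only [Set.mem_iUnion, Set.mem_union, not_exists, not_or] at hnot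
  rw [Metric.tendsto_atTop]
  intro ε hε
  obtain ⟨j, hj⟩ := exists_eps_le (show (0:ℝ) < ε / 2 by linarith)
  have h1 := (hnot j).1
  have h2 := (hnot j).2
  rw [UpSet, Set.mem_setOf_eq] at h1
  rw [DnSet, Set.mem_setOf_eq] at h2
  push_neg at h1 h2
  obtain ⟨N1, hN1⟩ := h1
  obtain ⟨N2, hN2⟩ := h2
  refine ⟨max (max N1 N2) 1, ?_⟩
  intro n hn
  have hn1 : N1 ≤ n := le_trans (le_trans (le_max_left _ _) (le_max_left _ _)) hn
  have hn2 : N2 ≤ n := le_trans (le_trans (le_max_right _ _) (le_max_left _ _)) hn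
  have hn3 : 1 ≤ n := le_trans (le_max_right _ _) hn
  have ha := hN1 n hn1 hn3
  have hb := hN2 n hn2 hn3
  rw [Real.dist_eq, abs_sub_lt_iff]
  constructor
  · linarith [eps_pos j]
  · linarith [eps_pos j]

lemma VY_not_tendsto_zero :
    E.VY {x : ℕ → ℝ | ¬ Tendsto (fun n => E.avg n x) atTop (nhds E.cC)} = 0 := by
  have hmeas : MeasurableSet {x : ℕ → ℝ | Tendsto (fun n => E.avg n x) atTop (nhds E.cC)} :=
    measurableSet_tendsto (nhds E.cC) (fun n => E.avg_meas n)
  have hmeasc : MeasurableSet {x : ℕ → ℝ | ¬ Tendsto (fun n => E.avg n x) atTop (nhds E.cC)} := by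
    have : {x : ℕ → ℝ | ¬ Tendsto (fun n => E.avg n x) atTop (nhds E.cC)} =
        {x : ℕ → ℝ | Tendsto (fun n => E.avg n x) atTop (nhds E.cC)}ᶜ := rfl
    rw [this]
    exact hmeas.compl
  apply le_antisymm
  · calc E.VY {x : ℕ → ℝ | ¬ Tendsto (fun n => E.avg n x) atTop (nhds E.cC)} ≤
        E.VY (⋃ j : ℕ, (E.UpSet (E.cC + eps j) ∪ E.DnSet (E.cC - eps j))) :=
          E.VY_mono hmeasc
            (MeasurableSet.iUnion (fun j => (E.UpSet_meas _).union (E.DnSet_meas _)))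
            E.not_tendsto_subset
      _ = 0 := E.VY_badUnion
  · exact E.VY_nonneg hmeasc

lemma avg_Ym (ω : Ω) (n : ℕ) :
    E.avg n (E.Ym ω) = (1 / (n : ℝ)) * ∑ k ∈ Finset.range n, E.Y k ω := by
  rw [avg]
  congr 1
  apply Finset.sum_congr rfl
  intro k _
  exact E.cl_eq (E.hbd k ω)

lemma main_v_one :
    E.v {ω | Tendsto (fun n : ℕ => (1 / (n : ℝ)) * ∑ k ∈ Finset.range n, E.Y k ω)
      atTop (nhds E.cC)} = 1 := by
  have hmeasΩ : MeasurableSet {ω | Tendsto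
      (fun n : ℕ => (1 / (n : ℝ)) * ∑ k ∈ Finset.range n, E.Y k ω) atTop (nhds E.cC)} := by
    apply measurableSet_tendsto (nhds E.cC)
    intro n
    apply Measurable.const_mul
    exact Finset.measurable_sum _ (fun k _ => E.hY k)
  apply v_eq_one_of_V_compl_zero E.hne E.hfa E.hV E.hv hmeasΩ
  have hWeq : {ω | Tendsto (fun n : ℕ => (1 / (n : ℝ)) * ∑ k ∈ Finset.range n, E.Y k ω)
      atTop (nhds E.cC)}ᶜ =
      E.Ym ⁻¹' {x : ℕ → ℝ | ¬ Tendsto (fun n => E.avg n x) atTop (nhds E.cC)} := by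
    ext ω
    simp only [Set.mem_compl_iff, Set.mem_setOf_eq, Set.mem_preimage]
    have : (fun n => E.avg n (E.Ym ω)) =
        (fun n : ℕ => (1 / (n : ℝ)) * ∑ k ∈ Finset.range n, E.Y k ω) := by
      funext n; exact E.avg_Ym ω n
    rw [this]
  rw [hWeq]
  exact E.VY_not_tendsto_zero


/-! ### Layer cake and Choquet bounds -/

noncomputable def gfun (s : ℝ) : ℝ := E.Q0 {x | s < E.cl (x 0)}

lemma gfun_set_meas (s : ℝ) : MeasurableSet {x : ℕ → ℝ | s < E.cl (x 0)} :=
  measurableSet_lt measurable_const E.cl0_meas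

lemma gfun_set_meas' (s : ℝ) : MeasurableSet {x : ℕ → ℝ | s ≤ E.cl (x 0)} :=
  measurableSet_le measurable_const E.cl0_meas

lemma gfun_eq (s : ℝ) : E.gfun s = (E.QM {x | s < E.cl (x 0)}).toReal :=
  (E.QM_real (E.gfun_set_meas s)).symm

lemma gfun_nonneg (s : ℝ) : 0 ≤ E.gfun s := E.Q0_nonneg (E.gfun_set_meas s)

lemma gfun_le_one (s : ℝ) : E.gfun s ≤ 1 := E.Q0_le_one (E.gfun_set_meas s)

lemma gfun_abs (s : ℝ) : |E.gfun s| ≤ 1 := by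
  rw [abs_of_nonneg (E.gfun_nonneg s)]
  exact E.gfun_le_one s

lemma gfun_anti : Antitone E.gfun := by
  intro s s' hss
  apply E.Q0_mono (E.gfun_set_meas s') (E.gfun_set_meas s)
  intro x hx
  simp only [Set.mem_setOf_eq] at hx ⊢
  exact lt_of_le_of_lt hss hx

lemma gfun_meas : Measurable E.gfun := E.gfun_anti.measurable

lemma gfun_zero {s : ℝ} (hs : E.M ≤ s) : E.gfun s = 0 := by
  have : {x : ℕ → ℝ | s < E.cl (x 0)} = ∅ := by
    ext x
    simp only [Set.mem_setOf_eq, Set.mem_empty_iff_false, iff_false, not_lt]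
    exact le_trans (le_trans (le_abs_self _) (E.cl0_abs x)) hs
  rw [gfun, this, E.Q0_empty]

lemma gfun_one {s : ℝ} (hs : s < -E.M) : E.gfun s = 1 := by
  have : {x : ℕ → ℝ | s < E.cl (x 0)} = Set.univ := by
    ext x
    simp only [Set.mem_setOf_eq, Set.mem_univ, iff_true]
    have := abs_le.1 (E.cl0_abs x)
    linarith [this.1]
  rw [gfun, this, E.Q0_univ]

lemma Yset_meas (t : ℝ) : MeasurableSet {ω | E.Y 0 ω ≥ t} :=
  measurableSet_le measurable_const (E.hY 0)

lemma Ym_Yset (t : ℝ) : E.Ym ⁻¹' {x : ℕ → ℝ | t ≤ E.cl (x 0)} = {ω | E.Y 0 ω ≥ t} := by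
  ext ω
  simp only [Set.mem_preimage, Set.mem_setOf_eq, ge_iff_le, Ym]
  rw [E.cl_eq (E.hbd 0 ω)]

lemma gfun_le_V (t : ℝ) : E.gfun t ≤ E.V {ω | E.Y 0 ω ≥ t} := by
  have h1 : E.gfun t ≤ E.Q0 {x | t ≤ E.cl (x 0)} := by
    apply E.Q0_mono (E.gfun_set_meas t) (E.gfun_set_meas' t)
    intro x hx
    simp only [Set.mem_setOf_eq] at hx ⊢
    exact le_of_lt hx
  have h2 : E.Q0 {x : ℕ → ℝ | t ≤ E.cl (x 0)} ≤ E.VY {x | t ≤ E.cl (x 0)} :=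
    E.Q0_le_VY (E.gfun_set_meas' t)
  have h3 : E.VY {x : ℕ → ℝ | t ≤ E.cl (x 0)} = E.V {ω | E.Y 0 ω ≥ t} := by
    rw [VY, E.Ym_Yset t]
  linarith

lemma v_le_gfun_shift (t δ : ℝ) (hδ : 0 < δ) :
    E.v {ω | E.Y 0 ω ≥ t} ≤ E.gfun (t - δ) := by
  have h1 : E.v {ω | E.Y 0 ω ≥ t} = E.vY {x | t ≤ E.cl (x 0)} := by
    rw [vY, E.Ym_Yset t]
  have h2 : E.vY {x : ℕ → ℝ | t ≤ E.cl (x 0)} ≤ E.Q0 {x | t ≤ E.cl (x 0)} :=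
    E.vY_le_Q0 (E.gfun_set_meas' t)
  have h3 : E.Q0 {x : ℕ → ℝ | t ≤ E.cl (x 0)} ≤ E.gfun (t - δ) := by
    apply E.Q0_mono (E.gfun_set_meas' t) (E.gfun_set_meas _)
    intro x hx
    simp only [Set.mem_setOf_eq] at hx ⊢
    linarith
  linarith

/-- Layer cake identity for `cC`. -/
lemma cC_eq : E.cC = (∫ s in Set.Ioi (0:ℝ), E.gfun s) +
    ∫ s in Set.Iio (0:ℝ), (E.gfun s - 1) := by
  have hint : Integrable (fun y : ℕ → ℝ => E.cl (y 0)) E.QM :=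
    integrable_of_bounded E.cl0_meas E.cl0_abs
  have hFm : Measurable (fun x : ℕ → ℝ => E.cl (x 0) + E.M) := E.cl0_meas.add_const _
  have hFi : Integrable (fun x : ℕ → ℝ => E.cl (x 0) + E.M) E.QM := by
    apply integrable_of_bounded hFm (b := 2 * E.M)
    intro x
    have := abs_le.1 (E.cl0_abs x)
    rw [abs_le]
    constructor <;> linarith [E.hM0]
  have hFnn : 0 ≤ᵐ[E.QM] (fun x : ℕ → ℝ => E.cl (x 0) + E.M) := by
    apply ae_of_all
    intro x
    simp only [Pi.zero_apply]
    have := abs_le.1 (E.cl0_abs x)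
    linarith
  have h1 := hFi.integral_eq_integral_meas_lt hFnn
  have hLHS : ∫ x, (E.cl (x 0) + E.M) ∂E.QM = E.cC + E.M := by
    rw [integral_add hint (integrable_const _), integral_const]
    simp [measure_univ, cC]
  have hsetEq : ∀ t : ℝ, {x : ℕ → ℝ | t < E.cl (x 0) + E.M} = {x | t - E.M < E.cl (x 0)} := by
    intro t
    ext x
    simp only [Set.mem_setOf_eq]
    constructor <;> intro h <;> linarith
  have hRHS : (∫ t in Set.Ioi (0:ℝ), E.QM.real {x | t < E.cl (x 0) + E.M}) =
      ∫ t in Set.Ioi (0:ℝ), E.gfun (t - E.M) := by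
    apply setIntegral_congr_fun measurableSet_Ioi
    intro t _
    show (E.QM {x | t < E.cl (x 0) + E.M}).toReal = E.gfun (t - E.M)
    rw [hsetEq t, ← E.gfun_eq (t - E.M)]
  rw [hLHS, hRHS] at h1
  have h2 : (∫ t in Set.Ioi (0:ℝ), E.gfun (t - E.M)) = ∫ s in Set.Ioi (-E.M), E.gfun s := by
    rw [integral_Ioi_comp_sub E.gfun 0 E.M, zero_sub]
  rw [h2] at h1
  have hsplit : Set.Ioc (-E.M) 0 ∪ Set.Ioi (0:ℝ) = Set.Ioi (-E.M) :=
    Set.Ioc_union_Ioi_eq_Ioi (neg_nonpos.2 E.hM0)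
  have hIoc_int : IntegrableOn E.gfun (Set.Ioc (-E.M) 0) volume :=
    integrableOn_of_bounded_finite E.gfun_meas E.gfun_abs (by simp [Real.volume_Ioc])
  have hIoi_int : IntegrableOn E.gfun (Set.Ioi (0:ℝ)) volume :=
    integrableOn_Ioi_of_vanish E.gfun_meas (R := E.M) E.gfun_abs (fun s hs => E.gfun_zero hs)
  have h3 : ∫ s in Set.Ioi (-E.M), E.gfun s =
      (∫ s in Set.Ioc (-E.M) 0, E.gfun s) + ∫ s in Set.Ioi (0:ℝ), E.gfun s := by
    rw [← hsplit, setIntegral_union (Set.Ioc_disjoint_Ioi le_rfl) measurableSet_Ioi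
      hIoc_int hIoi_int]
  rw [h3] at h1
  have hMeq : ∫ _ in Set.Ioc (-E.M) (0:ℝ), (1:ℝ) = E.M := by
    rw [setIntegral_const]
    simp [Real.volume_real_Ioc, E.hM0]
  have h5 : ∫ s in Set.Ioc (-E.M) (0:ℝ), (E.gfun s - 1) =
      (∫ s in Set.Ioc (-E.M) 0, E.gfun s) - E.M := by
    rw [integral_sub hIoc_int (integrableOn_const (by simp [Real.volume_Ioc]))]
    rw [hMeq]
  have hIio_int1 : IntegrableOn (fun s => E.gfun s - 1) (Set.Iio (-E.M)) volume := by
    apply IntegrableOn.congr_fun integrableOn_zero ?_ measurableSet_Iio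
    intro s hs
    show (0:ℝ) = E.gfun s - 1
    rw [E.gfun_one hs]
    ring
  have hIco_int : IntegrableOn (fun s => E.gfun s - 1) (Set.Ico (-E.M) 0) volume := by
    apply integrableOn_of_bounded_finite (E.gfun_meas.sub measurable_const) (b := 2)
    · intro s
      have h := abs_le.1 (E.gfun_abs s)
      simp only [Pi.sub_apply]
      rw [abs_le]
      constructor <;> linarith
    · simp [Real.volume_Ico]
  have h6 : ∫ s in Set.Iio (0:ℝ), (E.gfun s - 1) =
      ∫ s in Set.Ioc (-E.M) (0:ℝ), (E.gfun s - 1) := by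
    have hsplit2 : Set.Iio (-E.M) ∪ Set.Ico (-E.M) 0 = Set.Iio (0:ℝ) :=
      Set.Iio_union_Ico_eq_Iio (neg_nonpos.2 E.hM0)
    have hdisj : Disjoint (Set.Iio (-E.M)) (Set.Ico (-E.M) (0:ℝ)) := by
      rw [Set.disjoint_left]
      intro s hs1 hs2
      rw [Set.mem_Iio] at hs1
      exact absurd hs2.1 (not_le.2 hs1)
    rw [← hsplit2, setIntegral_union hdisj measurableSet_Ico hIio_int1 hIco_int]
    have hzero' : Set.EqOn (fun s => E.gfun s - 1) (fun _ => (0:ℝ)) (Set.Iio (-E.M)) := by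
      intro s hs
      simp only
      rw [E.gfun_one hs]
      ring
    have hzero : ∫ s in Set.Iio (-E.M), (E.gfun s - 1) = 0 := by
      rw [setIntegral_congr_fun measurableSet_Iio hzero']
      simp
    rw [hzero, zero_add]
    rw [integral_Ico_eq_integral_Ioo, integral_Ioc_eq_integral_Ioo]
  rw [h6, h5]
  linarith

def Vt (t : ℝ) : ℝ := E.V {ω | E.Y 0 ω ≥ t}

def vt (t : ℝ) : ℝ := E.v {ω | E.Y 0 ω ≥ t}

lemma Vt_anti : Antitone E.Vt := by
  intro t t' htt
  apply V_mono E.hne E.hfa E.hV (E.Yset_meas t') (E.Yset_meas t)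
  intro ω hω
  simp only [Set.mem_setOf_eq, ge_iff_le] at hω ⊢
  linarith

lemma vt_anti : Antitone E.vt := by
  intro t t' htt
  apply v_mono E.hne E.hfa E.hv (E.Yset_meas t') (E.Yset_meas t)
  intro ω hω
  simp only [Set.mem_setOf_eq, ge_iff_le] at hω ⊢
  linarith

lemma Vt_meas : Measurable E.Vt := E.Vt_anti.measurable

lemma vt_meas : Measurable E.vt := E.vt_anti.measurable

lemma Vt_abs (t : ℝ) : |E.Vt t| ≤ 1 := by
  rw [Vt]
  rw [abs_of_nonneg (V_nonneg E.hne E.hfa E.hV (E.Yset_meas t))]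
  exact V_le_one E.hne E.hfa E.hV (E.Yset_meas t)

lemma vt_abs (t : ℝ) : |E.vt t| ≤ 1 := by
  rw [vt]
  rw [abs_of_nonneg (v_nonneg E.hne E.hfa E.hv (E.Yset_meas t))]
  exact v_le_one E.hne E.hfa E.hv (E.Yset_meas t)

lemma Yset_empty {t : ℝ} (ht : E.M + 1 ≤ t) : {ω | E.Y 0 ω ≥ t} = ∅ := by
  ext ω
  simp only [Set.mem_setOf_eq, Set.mem_empty_iff_false, iff_false, ge_iff_le, not_le]
  have := abs_le.1 (E.hbd 0 ω)
  linarith [this.2]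

lemma Yset_univ {t : ℝ} (ht : t ≤ -E.M - 1) : {ω | E.Y 0 ω ≥ t} = Set.univ := by
  ext ω
  simp only [Set.mem_setOf_eq, Set.mem_univ, iff_true, ge_iff_le]
  have := abs_le.1 (E.hbd 0 ω)
  linarith [this.1]

lemma Vt_vanish {t : ℝ} (ht : E.M + 1 ≤ t) : E.Vt t = 0 := by
  rw [Vt, E.Yset_empty ht]
  exact V_empty E.hne E.hfa E.hV

lemma vt_vanish {t : ℝ} (ht : E.M + 1 ≤ t) : E.vt t = 0 := by
  rw [vt, E.Yset_empty ht]
  exact v_empty E.hne E.hfa E.hV E.hv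

lemma Vt_one {t : ℝ} (ht : t ≤ -E.M - 1) : E.Vt t = 1 := by
  rw [Vt, E.Yset_univ ht]
  exact V_univ E.hne E.hfa E.hV

lemma vt_one {t : ℝ} (ht : t ≤ -E.M - 1) : E.vt t = 1 := by
  rw [vt, E.Yset_univ ht]
  exact v_univ E.hne E.hfa E.hV E.hv

lemma choquet_V_eq : choquet E.V (E.Y 0) =
    (∫ t in Set.Ioi (0:ℝ), E.Vt t) + ∫ t in Set.Iio (0:ℝ), (E.Vt t - 1) := rfl

lemma choquet_v_eq : choquet E.v (E.Y 0) =
    (∫ t in Set.Ioi (0:ℝ), E.vt t) + ∫ t in Set.Iio (0:ℝ), (E.vt t - 1) := rfl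

lemma gfun_Ioi_int : IntegrableOn E.gfun (Set.Ioi (0:ℝ)) volume :=
  integrableOn_Ioi_of_vanish E.gfun_meas (R := E.M) E.gfun_abs (fun s hs => E.gfun_zero hs)

lemma gfun_Iio_int : IntegrableOn (fun s => E.gfun s - 1) (Set.Iio (0:ℝ)) volume := by
  apply integrableOn_Iio_of_vanish (E.gfun_meas.sub measurable_const) (b := 2)
    (R := -E.M - 1)
  · intro s
    have := abs_le.1 (E.gfun_abs s)
    simp only [Pi.sub_apply]
    rw [abs_le]
    constructor <;> linarith
  · intro s hs
    have : E.gfun s = 1 := E.gfun_one (by linarith)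
    simp [this]

lemma cC_le_choquetV : E.cC ≤ choquet E.V (E.Y 0) := by
  rw [E.cC_eq, E.choquet_V_eq]
  have hVi1 : IntegrableOn E.Vt (Set.Ioi (0:ℝ)) volume :=
    integrableOn_Ioi_of_vanish E.Vt_meas (R := E.M + 1) E.Vt_abs (fun s hs => E.Vt_vanish hs)
  have hVi2 : IntegrableOn (fun t => E.Vt t - 1) (Set.Iio (0:ℝ)) volume := by
    apply integrableOn_Iio_of_vanish (E.Vt_meas.sub measurable_const) (b := 2)
      (R := -E.M - 1)
    · intro s
      have := abs_le.1 (E.Vt_abs s)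
      simp only [Pi.sub_apply]
      rw [abs_le]
      constructor <;> linarith
    · intro s hs
      have : E.Vt s = 1 := E.Vt_one hs
      simp [this]
  apply add_le_add
  · exact setIntegral_mono_on E.gfun_Ioi_int hVi1 measurableSet_Ioi
      (fun t _ => E.gfun_le_V t)
  · apply setIntegral_mono_on E.gfun_Iio_int hVi2 measurableSet_Iio
    intro t _
    have := E.gfun_le_V t
    rw [Vt]
    linarith

lemma choquetv_le_cC : choquet E.v (E.Y 0) ≤ E.cC := by
  rw [E.cC_eq, E.choquet_v_eq]
  apply le_of_forall_pos_le_add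
  intro ε hε
  have hδ : 0 < ε / 2 := by linarith
  set δ := ε / 2 with hδdef
  have hvi1 : IntegrableOn E.vt (Set.Ioi (0:ℝ)) volume :=
    integrableOn_Ioi_of_vanish E.vt_meas (R := E.M + 1) E.vt_abs (fun s hs => E.vt_vanish hs)
  have hvi2 : IntegrableOn (fun t => E.vt t - 1) (Set.Iio (0:ℝ)) volume := by
    apply integrableOn_Iio_of_vanish (E.vt_meas.sub measurable_const) (b := 2)
      (R := -E.M - 1)
    · intro s
      have := abs_le.1 (E.vt_abs s)
      simp only [Pi.sub_apply]
      rw [abs_le]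
      constructor <;> linarith
    · intro s hs
      have : E.vt s = 1 := E.vt_one hs
      simp [this]
  have hcomp_meas : Measurable (fun t : ℝ => E.gfun (t - δ)) :=
    E.gfun_meas.comp (measurable_id.sub_const δ)
  have hcomp_abs : ∀ t : ℝ, |E.gfun (t - δ)| ≤ 1 := fun t => E.gfun_abs _
  -- part 1
  have p1 : (∫ t in Set.Ioi (0:ℝ), E.vt t) ≤ (∫ s in Set.Ioi (0:ℝ), E.gfun s) + δ := by
    have hci : IntegrableOn (fun t : ℝ => E.gfun (t - δ)) (Set.Ioi (0:ℝ)) volume := by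
      apply integrableOn_Ioi_of_vanish hcomp_meas (R := E.M + δ) hcomp_abs
      intro s hs
      exact E.gfun_zero (by linarith)
    have s1 : (∫ t in Set.Ioi (0:ℝ), E.vt t) ≤ ∫ t in Set.Ioi (0:ℝ), E.gfun (t - δ) := by
      apply setIntegral_mono_on hvi1 hci measurableSet_Ioi
      intro t _
      exact E.v_le_gfun_shift t δ hδ
    have s2 : (∫ t in Set.Ioi (0:ℝ), E.gfun (t - δ)) = ∫ s in Set.Ioi (-δ), E.gfun s := by
      rw [integral_Ioi_comp_sub E.gfun 0 δ, zero_sub]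
    have s3 : (∫ s in Set.Ioi (-δ), E.gfun s) =
        (∫ s in Set.Ioc (-δ) 0, E.gfun s) + ∫ s in Set.Ioi (0:ℝ), E.gfun s := by
      rw [← Set.Ioc_union_Ioi_eq_Ioi (neg_nonpos.2 hδ.le),
        setIntegral_union (Set.Ioc_disjoint_Ioi le_rfl) measurableSet_Ioi
          (integrableOn_of_bounded_finite E.gfun_meas E.gfun_abs (by simp [Real.volume_Ioc]))
          E.gfun_Ioi_int]
    have s4 : (∫ s in Set.Ioc (-δ) 0, E.gfun s) ≤ δ := by
      have hconst : (∫ _ in Set.Ioc (-δ) (0:ℝ), (1:ℝ)) = δ := by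
        rw [setIntegral_const]
        simp [Real.volume_real_Ioc, hδ.le]
      calc (∫ s in Set.Ioc (-δ) 0, E.gfun s) ≤ ∫ _ in Set.Ioc (-δ) (0:ℝ), (1:ℝ) := by
            apply setIntegral_mono_on
              (integrableOn_of_bounded_finite E.gfun_meas E.gfun_abs (by simp [Real.volume_Ioc]))
              (integrableOn_const (by simp [Real.volume_Ioc]))
              measurableSet_Ioc
            intro s _
            exact E.gfun_le_one s
        _ = δ := hconst
    linarith
  -- part 2
  have p2 : (∫ t in Set.Iio (0:ℝ), (E.vt t - 1)) ≤
      (∫ s in Set.Iio (0:ℝ), (E.gfun s - 1)) + δ := by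
    have hci2 : IntegrableOn (fun t : ℝ => E.gfun (t - δ) - 1) (Set.Iio (0:ℝ)) volume := by
      apply integrableOn_Iio_of_vanish (hcomp_meas.sub measurable_const) (b := 2)
        (R := -E.M - 1)
      · intro s
        have := abs_le.1 (hcomp_abs s)
        simp only [Pi.sub_apply]
        rw [abs_le]
        constructor <;> linarith
      · intro s hs
        have : E.gfun (s - δ) = 1 := E.gfun_one (by linarith)
        simp [this]
    have s1 : (∫ t in Set.Iio (0:ℝ), (E.vt t - 1)) ≤
        ∫ t in Set.Iio (0:ℝ), (E.gfun (t - δ) - 1) := by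
      apply setIntegral_mono_on hvi2 hci2 measurableSet_Iio
      intro t _
      have := E.v_le_gfun_shift t δ hδ
      rw [vt]
      linarith
    have s2 : (∫ t in Set.Iio (0:ℝ), (E.gfun (t - δ) - 1)) =
        ∫ s in Set.Iio (-δ), (E.gfun s - 1) := by
      rw [show (fun t : ℝ => E.gfun (t - δ) - 1) = (fun t : ℝ => (fun s => E.gfun s - 1) (t - δ))
        from rfl, integral_Iio_comp_sub (fun s => E.gfun s - 1) 0 δ, zero_sub]
    have hIcoδ : IntegrableOn (fun s => E.gfun s - 1) (Set.Ico (-δ) (0:ℝ)) volume := by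
      apply integrableOn_of_bounded_finite (E.gfun_meas.sub measurable_const) (b := 2)
      · intro s
        have := abs_le.1 (E.gfun_abs s)
        simp only [Pi.sub_apply]
        rw [abs_le]
        constructor <;> linarith
      · simp [Real.volume_Ico]
    have hIioδ : IntegrableOn (fun s => E.gfun s - 1) (Set.Iio (-δ)) volume := by
      apply integrableOn_Iio_of_vanish (E.gfun_meas.sub measurable_const) (b := 2)
        (R := -E.M - 1)
      · intro s
        have := abs_le.1 (E.gfun_abs s)
        simp only [Pi.sub_apply]
        rw [abs_le]
        constructor <;> linarith
      · intro s hs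
        have : E.gfun s = 1 := E.gfun_one (by linarith)
        simp [this]
    have s3 : (∫ s in Set.Iio (0:ℝ), (E.gfun s - 1)) =
        (∫ s in Set.Iio (-δ), (E.gfun s - 1)) + ∫ s in Set.Ico (-δ) 0, (E.gfun s - 1) := by
      have hdisj : Disjoint (Set.Iio (-δ)) (Set.Ico (-δ) (0:ℝ)) := by
        rw [Set.disjoint_left]
        intro s hs1 hs2
        rw [Set.mem_Iio] at hs1
        exact absurd hs2.1 (not_le.2 hs1)
      rw [← Set.Iio_union_Ico_eq_Iio (neg_nonpos.2 hδ.le),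
        setIntegral_union hdisj measurableSet_Ico hIioδ hIcoδ]
    have s4 : -δ ≤ ∫ s in Set.Ico (-δ) 0, (E.gfun s - 1) := by
      have hconst : (∫ _ in Set.Ico (-δ) (0:ℝ), (-1:ℝ)) = -δ := by
        rw [setIntegral_const]
        simp [Real.volume_real_Ico, hδ.le]
      calc (-δ : ℝ) = ∫ _ in Set.Ico (-δ) (0:ℝ), (-1:ℝ) := hconst.symm
        _ ≤ ∫ s in Set.Ico (-δ) 0, (E.gfun s - 1) := by
            apply setIntegral_mono_on
              (integrableOn_const (by simp [Real.volume_Ico]))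
              hIcoδ measurableSet_Ico
            intro s _
            linarith [E.gfun_nonneg s]
    linarith
  linarith

end Ctx

end Main


end SLLN

theorem stmt19 {Ω : Type*} [MeasurableSpace Ω]
    (𝒮 : Set (Set Ω → ℝ)) (h𝒮 : 𝒮.Nonempty) (hP : ∀ P ∈ 𝒮, IsFinAddProb P)
    (V v : Set Ω → ℝ) (hV : UpperProbOf 𝒮 V) (hv : LowerProbOf 𝒮 v)
    (hVb : ContBelow V) (hVa : ContAbove V) (hvb : ContBelow v) (hva : ContAbove v)
    (Y : ℕ → Ω → ℝ) (hY : ∀ n, Measurable (Y n))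
    (hbd : ∃ M : ℝ, ∀ (n : ℕ) (ω : Ω), |Y n ω| ≤ M)
    (hstat : StationaryCap V Y)
    (herg : ErgodicCap (fun C : Set (ℕ → ℝ) => V ((fun ω (n : ℕ) => Y n ω) ⁻¹' C))
      (fun (x : ℕ → ℝ) (n : ℕ) => x (n + 1))) :
    ∃ c : ℝ,
      v {ω | Filter.Tendsto
        (fun n : ℕ => (1 / (n : ℝ)) * ∑ k ∈ Finset.range n, Y k ω)
        Filter.atTop (nhds c)} = 1 ∧
      ((∀ A B : Set Ω, MeasurableSet A → MeasurableSet B →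
          V (A ∪ B) + V (A ∩ B) ≤ V A + V B) →
        choquet v (Y 0) ≤ c ∧ c ≤ choquet V (Y 0)) := by
  classical
  obtain ⟨M₀, hM₀⟩ := hbd
  set E : SLLN.Ctx Ω :=
    { 𝒮 := 𝒮, hne := h𝒮, hfa := hP, V := V, v := v, hV := hV, hv := hv,
      hVb := hVb, hVa := hVa, Y := Y, hY := hY, M := max M₀ 0,
      hM0 := le_max_right _ _,
      hbd := fun n ω => le_trans (hM₀ n ω) (le_max_left _ _),
      hstat := hstat, herg := herg } with hE
  refine ⟨E.cC, ?_, ?_⟩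
  · exact E.main_v_one
  · intro _
    exact ⟨E.choquetv_le_cC, E.cC_le_choquetV⟩
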